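/- arXiv:2004.08954 — 4 statements merged into one kernel-verified Lean document; each statement's English description precedes it below -/
import Mathlib

section
/- For every prime p ≥ 3, integers s ≥ 1, n ≥ 0, and every integer b with 0 ≤ b < p(n+1), one has |M_{p,s,n}(b) − Σ_{p,s,n,b}/(n+1)| ≤ p^{s(n+1)/2}, where Σ_{p,s,n,b} = (p−1)·p^{s(n+1)−1} if p divides b, and Σ_{p,s,n,b} = −p^{s(n+1)−1} otherwise. -/
open Polynomial Finset

/-- The polynomial `T_{p,s,n}(q) = ∏_{j=0}^n ∏_{k=1}^{p-1} (1 - q^{pj+k})^s`. -/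
noncomputable def borweinPoly (p s n : ℕ) : Polynomial ℤ :=
  ∏ j ∈ Finset.range (n + 1), ∏ k ∈ Finset.Icc 1 (p - 1),
    (1 - Polynomial.X ^ (p * j + k)) ^ s

/-- The coefficient `t_{i,p,s}` of `q^i` in `T_{p,s,n}(q)`. -/
noncomputable def borweinCoeff (p s n i : ℕ) : ℤ := (borweinPoly p s n).coeff i

/-- The degree `d_{p,s,n} = p(p-1)s(n+1)^2/2` of `T_{p,s,n}`. -/
def borweinDeg (p s n : ℕ) : ℕ := p * (p - 1) * s * (n + 1) ^ 2 / 2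

/-- `M_{p,s,n}(b) = ∑_{ℓ ≥ 0} t_{b + ℓ·p(n+1), p, s}`, a finite sum since the
coefficients vanish beyond the degree `d_{p,s,n}`. -/
noncomputable def borweinM (p s n b : ℕ) : ℤ :=
  ∑ l ∈ Finset.range (borweinDeg p s n + 1), borweinCoeff p s n (b + l * (p * (n + 1)))

lemma geo_sum {N : ℕ} {ζ : ℂ} (hζ : IsPrimitiveRoot ζ N) (m : ℕ) :
    ∑ a ∈ range N, (ζ ^ m) ^ a = if N ∣ m then (N : ℂ) else 0 := by
  split_ifs with h
  · obtain ⟨t, rfl⟩ := h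
    simp [pow_mul, hζ.pow_eq_one, mul_comm]
  · have hne : ζ ^ m ≠ 1 := fun h1 => h (hζ.dvd_of_pow_eq_one m h1)
    rw [geom_sum_eq hne]
    have : (ζ ^ m) ^ N = 1 := by
      rw [← pow_mul, mul_comm, pow_mul, hζ.pow_eq_one, one_pow]
    simp [this]

lemma prod_X_sub_primroot {z : ℂ} {d : ℕ} (hd : 0 < d) (hz : IsPrimitiveRoot z d) :
    ∏ i ∈ range d, (X - C (z ^ i)) = X ^ d - 1 := by
  rw [X_pow_sub_one_eq_prod hd hz]
  have himg : nthRootsFinset d (1 : ℂ) = (range d).image (fun i => z ^ i) := by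
    symm
    apply Finset.eq_of_subset_of_card_le
    · intro x hx
      simp only [mem_image, mem_range] at hx
      obtain ⟨i, hi, rfl⟩ := hx
      exact (mem_nthRootsFinset hd (1 : ℂ)).2 (by rw [← pow_mul, mul_comm, pow_mul, hz.pow_eq_one, one_pow])
    · rw [hz.card_nthRootsFinset, Finset.card_image_of_injOn (hz.injOn_pow.mono (by simp))]
      simp
  rw [himg, Finset.prod_image]
  intro i hi j hj hij
  exact hz.pow_inj (mem_range.1 hi) (mem_range.1 hj) hij

lemma prod_X_sub_periodic {z : ℂ} {d : ℕ} (h1 : z ^ d = 1) (q : ℕ) :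
    ∏ m ∈ range (q * d), (X - C (z ^ m)) = (∏ i ∈ range d, (X - C (z ^ i))) ^ q := by
  induction q with
  | zero => simp
  | succ q ih =>
    rw [Nat.succ_mul, Finset.prod_range_add, ih, pow_succ]
    congr 1
    apply Finset.prod_congr rfl
    intro i _
    congr 2
    rw [pow_add, pow_mul', h1, one_pow, one_mul]

lemma eval_S {p n N : ℕ} (hp : p.Prime) (hN : N = p * (n + 1)) {z : ℂ} {d : ℕ}
    (hz : IsPrimitiveRoot z d) (hd0 : 0 < d) (hdN : d ∣ N) :
    ∏ m ∈ (range N).filter (fun m => ¬ p ∣ m), (1 - z ^ m) =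
      if p ∣ d then (p : ℂ) ^ (N / d) else 0 := by
  have hN0 : 0 < N := hN ▸ Nat.mul_pos hp.pos (Nat.succ_pos n)
  split_ifs with h
  · -- p ∣ d
    obtain ⟨e, hd_pe⟩ : ∃ e, d = p * e := h
    have he0 : 0 < e := by
      rcases Nat.eq_zero_or_pos e with h0 | h0
      · exact absurd (hd_pe.trans (by rw [h0, mul_zero])) hd0.ne'
      · exact h0
    have hw : IsPrimitiveRoot (z ^ p) e := hz.pow hd0 (by rw [hd_pe, mul_comm])
    have hzd : z ^ d = 1 := hz.pow_eq_one
    have hzN : z ^ N = 1 := by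
      obtain ⟨t, rfl⟩ := hdN
      rw [pow_mul, hzd, one_pow]
    have hwe : (z ^ p) ^ e = 1 := hw.pow_eq_one
    have hen : e ∣ n + 1 := by
      apply hw.dvd_of_pow_eq_one
      rw [← pow_mul, ← hN, hzN]
    -- full product
    have hfull : ∏ m ∈ range N, (X - C (z ^ m)) = ((X : ℂ[X]) ^ d - 1) ^ (N / d) := by
      rw [← Nat.div_mul_cancel hdN, prod_X_sub_periodic hzd, prod_X_sub_primroot hd0 hz,
        Nat.div_mul_cancel hdN]
    -- multiples part
    have himg : (range N).filter (fun m => p ∣ m) = (range (n + 1)).image (fun m' => p * m') := by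
      ext m
      simp only [mem_filter, mem_range, mem_image]
      constructor
      · rintro ⟨hm, c, rfl⟩
        refine ⟨c, ?_, rfl⟩
        by_contra hc
        push_neg at hc
        have : p * (n + 1) ≤ p * c := Nat.mul_le_mul_left p hc
        omega
      · rintro ⟨c, hc, rfl⟩
        exact ⟨by rw [hN]; exact (Nat.mul_lt_mul_left hp.pos).2 hc, Dvd.intro c rfl⟩
    have hmult : ∏ m ∈ (range N).filter (fun m => p ∣ m), (X - C (z ^ m)) =
        ((X : ℂ[X]) ^ e - 1) ^ ((n + 1) / e) := by
      rw [himg, Finset.prod_image (fun a _ b _ hab => Nat.eq_of_mul_eq_mul_left hp.pos hab)]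
      have : ∀ m' : ℕ, z ^ (p * m') = (z ^ p) ^ m' := fun m' => by rw [pow_mul]
      simp only [this]
      rw [← Nat.div_mul_cancel hen, prod_X_sub_periodic hwe, prod_X_sub_primroot he0 hw,
        Nat.div_mul_cancel hen]
    have hNd : N / d = (n + 1) / e := by
      rw [hN, hd_pe, Nat.mul_div_mul_left _ _ hp.pos]
    have hsplit := Finset.prod_filter_mul_prod_filter_not (range N) (fun m => p ∣ m)
      (fun m => (X : ℂ[X]) - C (z ^ m))
    rw [hmult, hfull, ← hNd] at hsplit
    have hfactor : (X : ℂ[X]) ^ d - 1 = ((X : ℂ[X]) ^ e - 1) * (∑ i ∈ range p, ((X : ℂ[X]) ^ e) ^ i) := by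
      have := geom_sum_mul ((X : ℂ[X]) ^ e) p
      rw [← pow_mul, mul_comm e p, ← hd_pe] at this
      rw [← this, mul_comm]
    have hcancel : ∏ m ∈ (range N).filter (fun m => ¬ p ∣ m), (X - C (z ^ m)) =
        (∑ i ∈ range p, ((X : ℂ[X]) ^ e) ^ i) ^ (N / d) := by
      have hne : ((X : ℂ[X]) ^ e - 1) ^ (N / d) ≠ 0 :=
        pow_ne_zero _ (by simpa using X_pow_sub_C_ne_zero he0 (1 : ℂ))
      apply mul_left_cancel₀ hne
      rw [hsplit, hfactor, mul_pow]
    have := congrArg (eval 1) hcancel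
    simpa [eval_prod, eval_pow, eval_finset_sum] using this
  · -- p ∤ d : some factor vanishes
    have hcop : d.Coprime p := (hp.coprime_iff_not_dvd.2 h).symm
    have hdn : d ∣ n + 1 := by
      have : d ∣ (n + 1) * p := by rw [mul_comm]; exact hN ▸ hdN
      exact hcop.dvd_of_dvd_mul_right this
    have hdlt : d < N := by
      have h1 : d ≤ n + 1 := Nat.le_of_dvd (Nat.succ_pos n) hdn
      have h2 : n + 1 < p * (n + 1) := by nlinarith [hp.two_le]
      omega
    apply Finset.prod_eq_zero (i := d)
    · simp only [mem_filter, mem_range]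
      refine ⟨hdlt, fun hpd => h ?_⟩
      exact (Nat.Coprime.eq_one_of_dvd hcop.symm hpd) ▸ (by simpa using hpd)
    · rw [hz.pow_eq_one, sub_self]


lemma borweinPoly_eq (p s n : ℕ) (hp3 : 3 ≤ p) :
    borweinPoly p s n =
      (∏ m ∈ (range (p * (n + 1))).filter (fun m => ¬ p ∣ m), (1 - (X : ℤ[X]) ^ m)) ^ s := by
  unfold borweinPoly
  have h1 : ∀ j ∈ range (n+1), ∏ k ∈ Icc 1 (p-1), (1 - (X:ℤ[X]) ^ (p*j+k)) ^ s
      = (∏ k ∈ Icc 1 (p-1), (1 - (X:ℤ[X]) ^ (p*j+k))) ^ s := fun j _ => Finset.prod_pow _ _ _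
  rw [Finset.prod_congr rfl h1, Finset.prod_pow]
  congr 1
  rw [← Finset.prod_product']
  apply Finset.prod_nbij' (fun jk => p * jk.1 + jk.2) (fun m => (m / p, m % p))
  · rintro ⟨j, k⟩ hjk
    simp only [mem_product, mem_range, mem_Icc] at hjk
    simp only [mem_filter, mem_range]
    constructor
    · have h2 := Nat.mul_le_mul_left p (Nat.lt_succ_iff.1 hjk.1)
      have h3 : p * (n + 1) = p * n + p := by ring
      omega
    · intro hdvd
      have h1 : p ∣ k := (Nat.dvd_add_right ⟨j, rfl⟩).1 hdvd
      have := Nat.le_of_dvd (by omega) h1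
      omega
  · intro m hm
    simp only [mem_filter, mem_range] at hm
    simp only [mem_product, mem_range, mem_Icc]
    have hp0 : 0 < p := by omega
    have hmod : m % p ≠ 0 := fun h => hm.2 (Nat.dvd_of_mod_eq_zero h)
    refine ⟨?_, by omega, ?_⟩
    · have := Nat.div_lt_div_of_lt_of_dvd (Dvd.intro (n+1) rfl) hm.1
      rwa [Nat.mul_div_cancel_left _ hp0] at this
    · have := Nat.mod_lt m hp0
      omega
  · rintro ⟨j, k⟩ hjk
    simp only [mem_product, mem_range, mem_Icc] at hjk
    have hp0 : 0 < p := by omega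
    have hk : k < p := by omega
    simp [Nat.mul_add_div hp0, Nat.mul_add_mod, Nat.div_eq_of_lt hk, Nat.mod_eq_of_lt hk]
  · intro m hm
    exact (Nat.div_add_mod m p).symm ▸ rfl
  · intros; rfl

lemma borweinPoly_natDegree_le (p s n : ℕ) (hp3 : 3 ≤ p) :
    (borweinPoly p s n).natDegree ≤ (n + 1) * (p - 1) * (s * (p * (n + 1))) := by
  unfold borweinPoly
  calc (∏ j ∈ range (n+1), ∏ k ∈ Icc 1 (p-1), (1 - (X:ℤ[X]) ^ (p*j+k)) ^ s).natDegree
      ≤ ∑ j ∈ range (n+1), (∏ k ∈ Icc 1 (p-1), (1 - (X:ℤ[X]) ^ (p*j+k)) ^ s).natDegree :=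
        natDegree_prod_le _ _
    _ ≤ ∑ j ∈ range (n+1), ∑ k ∈ Icc 1 (p-1), ((1 - (X:ℤ[X]) ^ (p*j+k)) ^ s).natDegree :=
        Finset.sum_le_sum fun j _ => natDegree_prod_le _ _
    _ ≤ ∑ j ∈ range (n+1), ∑ k ∈ Icc 1 (p-1), (s * (p * (n + 1))) := by
        apply Finset.sum_le_sum
        intro j hj
        apply Finset.sum_le_sum
        intro k hk
        simp only [mem_range] at hj
        simp only [mem_Icc] at hk
        calc ((1 - (X:ℤ[X]) ^ (p*j+k)) ^ s).natDegree
            ≤ s * (1 - (X:ℤ[X]) ^ (p*j+k)).natDegree := natDegree_pow_le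
          _ ≤ s * (p * (n + 1)) := by
              apply Nat.mul_le_mul_left
              calc (1 - (X:ℤ[X]) ^ (p*j+k)).natDegree
                  ≤ max (1 : ℤ[X]).natDegree ((X:ℤ[X]) ^ (p*j+k)).natDegree := natDegree_sub_le _ _
                _ ≤ p * (n + 1) := by
                    simp only [natDegree_one, natDegree_X_pow, Nat.zero_max]
                    have h2 := Nat.mul_le_mul_left p (Nat.lt_succ_iff.1 hj)
                    have h3 : p * (n + 1) = p * n + p := by ring
                    omega
    _ = (n + 1) * (p - 1) * (s * (p * (n + 1))) := by
        rw [Finset.sum_const, Finset.sum_const, Nat.card_Icc, card_range]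
        simp [smul_eq_mul, mul_assoc]

lemma borwein_filter {p s n b : ℕ} (hp3 : 3 ≤ p) (hb : b < p * (n + 1))
    {ζ : ℂ} (hζ : IsPrimitiveRoot ζ (p * (n + 1))) :
    (p * (n + 1) : ℕ) * (borweinM p s n b : ℂ) =
      ∑ a ∈ range (p * (n + 1)), ζ ^ ((p * (n + 1) - b) * a) *
        eval (ζ ^ a) ((borweinPoly p s n).map (Int.castRingHom ℂ)) := by
  set N := p * (n + 1) with hN
  set D := borweinDeg p s n with hD
  set c := N - b with hc
  set R := b + (D + 1) * N with hR
  have hN0 : 0 < N := by positivity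
  have hDN : (n + 1) * (p - 1) * (s * N) ≤ D * N := by
    have key : (n + 1) * (p - 1) * s ≤ D := by
      rw [hD]
      unfold borweinDeg
      rw [Nat.le_div_iff_mul_le (by norm_num)]
      have h2 : 2 ≤ p * (n + 1) := by nlinarith
      have h3 : 2 * (n + 1) ≤ (p * (n + 1)) * (n + 1) := Nat.mul_le_mul_right _ h2
      have h4 : ((p - 1) * s) * (2 * (n + 1)) ≤ ((p - 1) * s) * ((p * (n + 1)) * (n + 1)) :=
        Nat.mul_le_mul_left _ h3
      calc (n + 1) * (p - 1) * s * 2 = ((p - 1) * s) * (2 * (n + 1)) := by ring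
        _ ≤ ((p - 1) * s) * ((p * (n + 1)) * (n + 1)) := h4
        _ = p * (p - 1) * s * (n + 1) ^ 2 := by ring
    calc (n + 1) * (p - 1) * (s * N) = ((n + 1) * (p - 1) * s) * N := by ring
      _ ≤ D * N := Nat.mul_le_mul_right _ key
  have hdeg : ((borweinPoly p s n).map (Int.castRingHom ℂ)).natDegree < R := by
    calc ((borweinPoly p s n).map (Int.castRingHom ℂ)).natDegree
        ≤ (borweinPoly p s n).natDegree := natDegree_map_le
      _ ≤ (n + 1) * (p - 1) * (s * N) := borweinPoly_natDegree_le p s n hp3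
      _ ≤ D * N := hDN
      _ < R := by
          have he : (D + 1) * N = D * N + N := by ring
          omega
  have heval : ∀ a : ℕ, eval (ζ ^ a) ((borweinPoly p s n).map (Int.castRingHom ℂ)) =
      ∑ i ∈ range R, (borweinCoeff p s n i : ℂ) * (ζ ^ a) ^ i := by
    intro a
    rw [eval_eq_sum_range' hdeg]
    exact Finset.sum_congr rfl fun i _ => by rw [coeff_map]; rfl
  conv_lhs => rw [show (borweinM p s n b : ℂ) = ∑ l ∈ range (D + 1),
    (borweinCoeff p s n (b + l * N) : ℂ) by rw [borweinM]; push_cast; rfl]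
  calc (N : ℂ) * ∑ l ∈ range (D + 1), (borweinCoeff p s n (b + l * N) : ℂ)
      = ∑ l ∈ range (D + 1), (borweinCoeff p s n (b + l * N) : ℂ) * N := by
        rw [Finset.mul_sum]; exact Finset.sum_congr rfl fun l _ => by ring
    _ = ∑ i ∈ (range R).filter (fun i => N ∣ c + i), (borweinCoeff p s n i : ℂ) * N := by
        symm
        apply Finset.sum_nbij' (fun i => (i - b) / N) (fun l => b + l * N)
        · intro i hi
          simp only [mem_filter, mem_range] at hi
          simp only [mem_range]
          obtain ⟨hiR, t, ht⟩ := hi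
          have ht1 : 1 ≤ t := by
            rcases Nat.eq_zero_or_pos t with rfl | h'
            · simp at ht; omega
            · exact h'
          obtain ⟨t', rfl⟩ : ∃ t', t = t' + 1 := ⟨t - 1, by omega⟩
          have hms : N * (t' + 1) = N * t' + N := by ring
          have hRe : (D + 1) * N = D * N + N := by ring
          have hib : i - b = N * t' := by omega
          have hdiv : (i - b) / N = t' := by rw [hib, Nat.mul_div_cancel_left _ hN0]
          have hcm : t' * N = N * t' := Nat.mul_comm _ _
          rw [hdiv]
          by_contra hcon
          push_neg at hcon
          have : (D + 1) * N ≤ t' * N := Nat.mul_le_mul_right _ hcon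
          omega
        · intro l hl
          simp only [mem_range] at hl
          simp only [mem_filter, mem_range]
          have h1 : l * N ≤ D * N := Nat.mul_le_mul_right N (by omega)
          have hRe : (D + 1) * N = D * N + N := by ring
          constructor
          · omega
          · refine ⟨1 + l, ?_⟩
            have : N * (1 + l) = N + l * N := by ring
            omega
        · intro i hi
          simp only [mem_filter, mem_range] at hi
          obtain ⟨hiR, t, ht⟩ := hi
          have ht1 : 1 ≤ t := by
            rcases Nat.eq_zero_or_pos t with rfl | h'
            · simp at ht; omega
            · exact h'
          obtain ⟨t', rfl⟩ : ∃ t', t = t' + 1 := ⟨t - 1, by omega⟩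
          have hms : N * (t' + 1) = N * t' + N := by ring
          have hRe : (D + 1) * N = D * N + N := by ring
          have hib : i - b = N * t' := by omega
          have hdiv : (i - b) / N = t' := by rw [hib, Nat.mul_div_cancel_left _ hN0]
          have hcm : t' * N = N * t' := Nat.mul_comm _ _
          rw [hdiv]
          omega
        · intro l hl
          simp only [mem_range] at hl
          rw [Nat.add_sub_cancel_left, Nat.mul_div_cancel _ hN0]
        · intro i hi
          simp only [mem_filter, mem_range] at hi
          obtain ⟨hiR, t, ht⟩ := hi
          have ht1 : 1 ≤ t := by
            rcases Nat.eq_zero_or_pos t with rfl | h'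
            · simp at ht; omega
            · exact h'
          obtain ⟨t', rfl⟩ : ∃ t', t = t' + 1 := ⟨t - 1, by omega⟩
          have hms : N * (t' + 1) = N * t' + N := by ring
          have hRe : (D + 1) * N = D * N + N := by ring
          have hib : i - b = N * t' := by omega
          have hdiv : (i - b) / N = t' := by rw [hib, Nat.mul_div_cancel_left _ hN0]
          have hcm : t' * N = N * t' := Nat.mul_comm _ _
          rw [hdiv]
          have heq : b + t' * N = i := by omega
          rw [heq]
    _ = ∑ i ∈ range R, (borweinCoeff p s n i : ℂ) * (if N ∣ c + i then (N : ℂ) else 0) := by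
        rw [Finset.sum_filter]
        exact Finset.sum_congr rfl fun i _ => by split_ifs <;> simp
    _ = ∑ i ∈ range R, (borweinCoeff p s n i : ℂ) * ∑ a ∈ range N, (ζ ^ (c + i)) ^ a := by
        exact Finset.sum_congr rfl fun i _ => by rw [geo_sum hζ]
    _ = ∑ a ∈ range N, ζ ^ (c * a) * ∑ i ∈ range R, (borweinCoeff p s n i : ℂ) * (ζ ^ a) ^ i := by
        simp only [Finset.mul_sum]
        rw [Finset.sum_comm]
        apply Finset.sum_congr rfl
        intro i _
        apply Finset.sum_congr rfl
        intro a _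
        rw [← pow_mul, ← pow_mul, add_mul, pow_add, mul_comm a i]
        ring
    _ = ∑ a ∈ range N, ζ ^ (c * a) * eval (ζ ^ a) ((borweinPoly p s n).map (Int.castRingHom ℂ)) := by
        exact Finset.sum_congr rfl fun a _ => by rw [heval]


-- primitivity of powers of ζ
lemma prim_pow {N : ℕ} (hN0 : 0 < N) {ζ : ℂ} (hζ : IsPrimitiveRoot ζ N) (a : ℕ) :
    IsPrimitiveRoot (ζ ^ a) (N / Nat.gcd a N) := by
  have hgN : Nat.gcd a N ∣ N := Nat.gcd_dvd_right a N
  have hg0 : 0 < Nat.gcd a N := Nat.gcd_pos_of_pos_right a hN0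
  have h1 : IsPrimitiveRoot (ζ ^ Nat.gcd a N) (N / Nat.gcd a N) :=
    hζ.pow hN0 (Nat.mul_div_cancel' hgN).symm
  have h3 := h1.pow_of_coprime (a / Nat.gcd a N) (Nat.coprime_div_gcd_div_gcd hg0)
  rwa [← pow_mul, Nat.mul_div_cancel' (Nat.gcd_dvd_left a N)] at h3

lemma eval_T {p s n : ℕ} (hp : Nat.Prime p) (hp3 : 3 ≤ p) {ζ : ℂ}
    (hζ : IsPrimitiveRoot ζ (p * (n + 1))) (a : ℕ) :
    eval (ζ ^ a) ((borweinPoly p s n).map (Int.castRingHom ℂ)) =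
      (if p ∣ (p * (n + 1)) / Nat.gcd a (p * (n + 1)) then
        (p : ℂ) ^ ((p * (n + 1)) / ((p * (n + 1)) / Nat.gcd a (p * (n + 1)))) else 0) ^ s := by
  set N := p * (n + 1) with hN
  have hN0 : 0 < N := by positivity
  have hgN : Nat.gcd a N ∣ N := Nat.gcd_dvd_right a N
  have hg0 : 0 < Nat.gcd a N := Nat.gcd_pos_of_pos_right a hN0
  have hd0 : 0 < N / Nat.gcd a N := Nat.div_pos (Nat.le_of_dvd hN0 hgN) hg0
  have hdN : N / Nat.gcd a N ∣ N := Nat.div_dvd_of_dvd hgN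
  have hev := eval_S hp hN (prim_pow hN0 hζ a) hd0 hdN
  rw [borweinPoly_eq p s n hp3]
  rw [Polynomial.map_pow, Polynomial.map_prod]
  simp only [Polynomial.map_sub, Polynomial.map_one, Polynomial.map_pow, Polynomial.map_X]
  rw [eval_pow, eval_prod]
  simp only [eval_sub, eval_one, eval_pow, eval_X]
  rw [hev]

lemma ram_sum {p c : ℕ} (hp : Nat.Prime p) {ω : ℂ} (hω : IsPrimitiveRoot ω p) :
    ∑ k ∈ Icc 1 (p - 1), ω ^ (c * k) = if p ∣ c then ((p : ℂ) - 1) else -1 := by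
  have h0 : Icc 1 (p - 1) = (range p).erase 0 := by
    ext k
    simp only [mem_Icc, mem_erase, mem_range]
    have := hp.two_le
    omega
  have h1 : ∀ k : ℕ, ω ^ (c * k) = (ω ^ c) ^ k := fun k => by rw [pow_mul]
  rw [h0, Finset.sum_erase_eq_sub (by simpa using hp.pos)]
  simp only [h1]
  rw [geo_sum hω c]
  split_ifs <;> simp

lemma mem_A0 {p n a : ℕ} (hp : Nat.Prime p) (hp3 : 3 ≤ p) (haN : a < p * (n + 1))
    (hdp : (p * (n + 1)) / Nat.gcd a (p * (n + 1)) = p) :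
    a ∈ (Icc 1 (p - 1)).image (fun k => k * (n + 1)) := by
  have hN0 : 0 < p * (n + 1) := by positivity
  have hgN : Nat.gcd a (p * (n + 1)) ∣ p * (n + 1) := Nat.gcd_dvd_right a _
  have hNp : p * (n + 1) / p = n + 1 := Nat.mul_div_cancel_left _ hp.pos
  have hgval : Nat.gcd a (p * (n + 1)) = n + 1 := by
    have h2 := Nat.div_div_self hgN hN0.ne'
    rw [hdp, hNp] at h2
    exact h2.symm
  have hdvda : (n + 1) ∣ a := hgval ▸ Nat.gcd_dvd_left a _
  obtain ⟨k, rfl⟩ := hdvda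
  have hkp : k < p := by
    by_contra hcon
    push_neg at hcon
    have : p * (n + 1) ≤ (n + 1) * k := by
      calc p * (n + 1) = (n + 1) * p := by ring
        _ ≤ (n + 1) * k := Nat.mul_le_mul_left _ hcon
    omega
  have hgcd2 : Nat.gcd k p = 1 := by
    have h3 : Nat.gcd ((n + 1) * k) ((n + 1) * p) = (n + 1) * Nat.gcd k p :=
      Nat.gcd_mul_left _ _ _
    rw [show (n + 1) * p = p * (n + 1) by ring, hgval] at h3
    have h5 : (n + 1) * 1 = (n + 1) * Nat.gcd k p := by omega
    have := Nat.eq_of_mul_eq_mul_left (show 0 < n + 1 by omega) h5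
    omega
  have hk1 : 1 ≤ k := by
    rcases Nat.eq_zero_or_pos k with rfl | h'
    · rw [Nat.gcd_comm] at hgcd2
      simp at hgcd2
      omega
    · exact h'
  exact mem_image.2 ⟨k, mem_Icc.2 ⟨hk1, by omega⟩, by ring⟩

theorem stmt_0 (p s n b : ℕ) (hp : p.Prime) (hp3 : 3 ≤ p) (hs : 1 ≤ s)
    (hb : b < p * (n + 1)) :
    |(borweinM p s n b : ℝ) -
        (if p ∣ b then ((p : ℝ) - 1) * (p : ℝ) ^ (s * (n + 1) - 1)
          else -(p : ℝ) ^ (s * (n + 1) - 1)) / ((n : ℝ) + 1)|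
      ≤ (p : ℝ) ^ (((s : ℝ) * ((n : ℝ) + 1)) / 2) := by
  have hN0 : 0 < p * (n + 1) := by positivity
  obtain ⟨ζ, hζ⟩ : ∃ ζ : ℂ, IsPrimitiveRoot ζ (p * (n + 1)) :=
    ⟨_, Complex.isPrimitiveRoot_exp _ hN0.ne'⟩
  have hfilter := borwein_filter (s := s) hp3 hb hζ
  set T := (borweinPoly p s n).map (Int.castRingHom ℂ) with hT
  set c := p * (n + 1) - b with hc
  set A₀ := (Icc 1 (p - 1)).image (fun k => k * (n + 1)) with hA₀
  set B := (p : ℝ) ^ (((s : ℝ) * ((n : ℝ) + 1)) / 2) with hB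
  have hB0 : (0:ℝ) ≤ B := Real.rpow_nonneg (by positivity) _
  have hA₀sub : A₀ ⊆ range (p * (n + 1)) := by
    intro a ha
    simp only [hA₀, mem_image, mem_Icc] at ha
    obtain ⟨k, hk, rfl⟩ := ha
    simp only [mem_range]
    have : k < p := by omega
    exact Nat.mul_lt_mul_of_lt_of_le this (le_refl (n + 1)) (by omega)
  have hgcd : ∀ k, 1 ≤ k → k ≤ p - 1 → Nat.gcd (k * (n + 1)) (p * (n + 1)) = n + 1 := by
    intro k h1 h2
    rw [Nat.gcd_mul_right]
    have hpk : ¬ p ∣ k := fun hd => by have := Nat.le_of_dvd (by omega) hd; omega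
    have : Nat.gcd k p = 1 := Nat.Coprime.gcd_eq_one ((hp.coprime_iff_not_dvd.2 hpk).symm)
    rw [this, one_mul]
  have hNdiv : p * (n + 1) / (n + 1) = p := Nat.mul_div_cancel p (by omega)
  have hNp : p * (n + 1) / p = n + 1 := Nat.mul_div_cancel_left _ hp.pos
  have hω : IsPrimitiveRoot (ζ ^ (n + 1)) p := hζ.pow hN0 (Nat.mul_comm p (n + 1))
  have hpc : (p ∣ c) ↔ (p ∣ b) := by
    have hpN : p ∣ p * (n + 1) := Dvd.intro _ rfl
    constructor
    · intro h
      have hbc : b = p * (n + 1) - c := by omega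
      rw [hbc]; exact Nat.dvd_sub hpN h
    · intro h
      exact Nat.dvd_sub hpN h
  -- main term
  have hmain : ∑ a ∈ A₀, ζ ^ (c * a) * eval (ζ ^ a) T =
      (if p ∣ b then ((p : ℂ) - 1) else -1) * ((p : ℂ) ^ (n + 1)) ^ s := by
    rw [hA₀, Finset.sum_image (fun x _ y _ hxy => Nat.eq_of_mul_eq_mul_right (by omega) hxy)]
    have hev : ∀ k ∈ Icc 1 (p - 1), ζ ^ (c * (k * (n + 1))) * eval (ζ ^ (k * (n + 1))) T
        = (ζ ^ (n + 1)) ^ (c * k) * ((p : ℂ) ^ (n + 1)) ^ s := by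
      intro k hk
      simp only [mem_Icc] at hk
      rw [eval_T hp hp3 hζ, hgcd k hk.1 hk.2, hNdiv, if_pos dvd_rfl, hNp]
      congr 1
      rw [← pow_mul]
      congr 1
      ring
    rw [Finset.sum_congr rfl hev, ← Finset.sum_mul, ram_sum hp hω]
    congr 1
    simp only [hpc]
  -- error bound
  have habsζ : ‖ζ‖ = 1 := by
    exact Complex.norm_eq_one_of_pow_eq_one hζ.pow_eq_one hN0.ne'
  have herr : ∀ a ∈ range (p * (n + 1)) \ A₀, ‖ζ ^ (c * a) * eval (ζ ^ a) T‖ ≤ B := by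
    intro a ha
    simp only [mem_sdiff, mem_range] at ha
    obtain ⟨haN, haA⟩ := ha
    rw [norm_mul, norm_pow, habsζ, one_pow, one_mul, eval_T hp hp3 hζ a]
    have hgN : Nat.gcd a (p * (n + 1)) ∣ p * (n + 1) := Nat.gcd_dvd_right a _
    have hg0 : 0 < Nat.gcd a (p * (n + 1)) := Nat.gcd_pos_of_pos_right a hN0
    have hd0 : 0 < p * (n + 1) / Nat.gcd a (p * (n + 1)) :=
      Nat.div_pos (Nat.le_of_dvd hN0 hgN) hg0
    by_cases hpd : p ∣ p * (n + 1) / Nat.gcd a (p * (n + 1))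
    · -- d ≠ p
      have hdp : p * (n + 1) / Nat.gcd a (p * (n + 1)) ≠ p := by
        intro hdp
        exact haA (hA₀ ▸ mem_A0 hp hp3 haN hdp)
      -- 2p ≤ d
      have h2p : p * 2 ≤ p * (n + 1) / Nat.gcd a (p * (n + 1)) := by
        obtain ⟨h, hh⟩ := hpd
        have hh0 : h ≠ 0 := by rintro rfl; rw [mul_zero] at hh; omega
        have hh1 : h ≠ 1 := by rintro rfl; simp at hh; exact hdp hh
        calc p * 2 ≤ p * h := Nat.mul_le_mul_left p (by omega)
          _ = _ := hh.symm
      have hq : p * (n + 1) / (p * (n + 1) / Nat.gcd a (p * (n + 1))) ≤ (n + 1) / 2 := by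
        calc p * (n + 1) / (p * (n + 1) / Nat.gcd a (p * (n + 1)))
            ≤ p * (n + 1) / (p * 2) := Nat.div_le_div_left h2p (by positivity)
          _ = (n + 1) / 2 := Nat.mul_div_mul_left _ _ hp.pos
      rw [if_pos hpd, ← pow_mul, norm_pow, Complex.norm_natCast,
        ← Real.rpow_natCast (p : ℝ) _, hB]
      apply Real.rpow_le_rpow_of_exponent_le (by exact_mod_cast hp.one_lt.le)
      push_cast
      calc ((p * (n + 1) / (p * (n + 1) / Nat.gcd a (p * (n + 1))) : ℕ) : ℝ) * s
          ≤ (((n + 1) / 2 : ℕ) : ℝ) * s := by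
            apply mul_le_mul_of_nonneg_right _ (by positivity)
            exact_mod_cast hq
        _ ≤ (((n : ℝ) + 1) / 2) * s := by
            apply mul_le_mul_of_nonneg_right _ (by positivity)
            calc (((n + 1) / 2 : ℕ) : ℝ) ≤ ((n + 1 : ℕ) : ℝ) / 2 := Nat.cast_div_le
              _ = ((n : ℝ) + 1) / 2 := by push_cast; ring
        _ = (s : ℝ) * ((n : ℝ) + 1) / 2 := by ring
    · rw [if_neg hpd, zero_pow (by omega : s ≠ 0), norm_zero]
      exact hB0
  -- assemble
  have hsplit := Finset.sum_sdiff (f := fun a => ζ ^ (c * a) * eval (ζ ^ a) T) hA₀sub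
  set mainC : ℂ := (if p ∣ b then ((p : ℂ) - 1) else -1) * ((p : ℂ) ^ (n + 1)) ^ s with hmC
  have hEq : ((p * (n + 1) : ℕ) : ℂ) * (borweinM p s n b : ℂ) - mainC =
      ∑ a ∈ range (p * (n + 1)) \ A₀, ζ ^ (c * a) * eval (ζ ^ a) T := by
    rw [hfilter, ← hsplit, hmain]
    ring
  have habs : ‖((p * (n + 1) : ℕ) : ℂ) * (borweinM p s n b : ℂ) - mainC‖ ≤
      ((p * (n + 1) : ℕ) : ℝ) * B := by
    rw [hEq]
    calc ‖∑ a ∈ range (p * (n + 1)) \ A₀, ζ ^ (c * a) * eval (ζ ^ a) T‖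
        ≤ ∑ a ∈ range (p * (n + 1)) \ A₀, ‖ζ ^ (c * a) * eval (ζ ^ a) T‖ :=
          norm_sum_le _ _
      _ ≤ ∑ _a ∈ range (p * (n + 1)) \ A₀, B := Finset.sum_le_sum herr
      _ = (range (p * (n + 1)) \ A₀).card * B := by rw [Finset.sum_const, nsmul_eq_mul]
      _ ≤ ((p * (n + 1) : ℕ) : ℝ) * B := by
          apply mul_le_mul_of_nonneg_right _ hB0
          have := Finset.card_le_card (Finset.sdiff_subset (s := range (p * (n + 1))) (t := A₀))
          rw [Finset.card_range] at this
          exact_mod_cast this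
  -- final cast computation
  have hNC : ((p * (n + 1) : ℕ) : ℂ) ≠ 0 := Nat.cast_ne_zero.2 hN0.ne'
  have key : ∀ x : ℝ, ((x : ℂ) = (((p * (n + 1) : ℕ) : ℂ) * (borweinM p s n b : ℂ) - mainC) /
      ((p * (n + 1) : ℕ) : ℂ)) → |x| ≤ B := by
    intro x hx
    have h1 : ‖(x : ℂ)‖ ≤ B := by
      rw [hx, norm_div, Complex.norm_natCast, div_le_iff₀ (by positivity)]
      calc ‖_‖ ≤ ((p * (n + 1) : ℕ) : ℝ) * B := habs
        _ = B * ((p * (n + 1) : ℕ) : ℝ) := by ring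
    rwa [Complex.norm_real, Real.norm_eq_abs] at h1
  have hsn1 : 1 ≤ s * (n + 1) := Nat.one_le_iff_ne_zero.2 (by positivity)
  obtain ⟨E, hE⟩ : ∃ E, s * (n + 1) = E + 1 := ⟨s * (n + 1) - 1, by omega⟩
  rw [show s * (n + 1) - 1 = E by omega]
  apply key
  rw [eq_div_iff hNC]
  have hpow : ((p : ℂ) ^ (n + 1)) ^ s = (p : ℂ) ^ (E + 1) := by
    rw [← pow_mul, Nat.mul_comm, hE]
  have hn1 : ((n : ℂ) + 1) ≠ 0 := Nat.cast_add_one_ne_zero n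
  by_cases hpb : p ∣ b
  · simp only [hmC, if_pos hpb]
    rw [hpow]
    push_cast
    field_simp
    ring
  · simp only [hmC, if_neg hpb]
    rw [hpow]
    push_cast
    field_simp
    ring
end

section
/- Let p ≥ 3 be a prime, s ≥ 1, n ≥ 0 integers, and b an integer with 0 ≤ b < p(n+1) and p ∤ b. If p^{s(n+1)/2−1} > n+1, then M_{p,s,n}(b) < 0. -/
open Polynomial Finset

lemma borweinPoly_eq_filter (p s n : ℕ) (hp : p.Prime) :
    borweinPoly p s n =
      ∏ i ∈ (Finset.range (p * (n + 1))).filter (fun i => ¬ p ∣ i), (1 - X ^ i) ^ s := by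
  have hp2 := hp.two_le
  rw [borweinPoly, ← Finset.prod_product']
  refine Finset.prod_nbij' (fun x => p * x.1 + x.2) (fun i => (i / p, i % p)) ?_ ?_ ?_ ?_ ?_
  · rintro ⟨j, k⟩ hx
    simp only [Finset.mem_product, Finset.mem_range, Finset.mem_Icc] at hx
    simp only [Finset.mem_filter, Finset.mem_range]
    constructor
    · have : k < p := by omega
      nlinarith [hx.1, hx.2.1, hx.2.2]
    · intro hdvd
      have : p ∣ k := (Nat.dvd_add_right ⟨j, rfl⟩).mp hdvd
      have := Nat.le_of_dvd (by omega) this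
      omega
  · intro i hi
    simp only [Finset.mem_filter, Finset.mem_range] at hi
    simp only [Finset.mem_product, Finset.mem_range, Finset.mem_Icc]
    refine ⟨?_, ?_, ?_⟩
    · exact Nat.div_lt_of_lt_mul (by rw [mul_comm] at hi ⊢; exact hi.1)
    · rcases Nat.eq_zero_or_pos (i % p) with h | h
      · exact absurd (Nat.dvd_of_mod_eq_zero h) hi.2
      · omega
    · have := Nat.mod_lt i (show 0 < p by omega)
      omega
  · rintro ⟨j, k⟩ hx
    simp only [Finset.mem_product, Finset.mem_range, Finset.mem_Icc] at hx
    have hk : k < p := by omega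
    simp [Nat.add_mul_div_left, Nat.add_mul_mod_self_left, Nat.mul_add_div, Nat.div_eq_of_lt hk,
      Nat.mod_eq_of_lt hk, Prod.ext_iff, Nat.mul_add_mod]
    rw [Nat.mul_add_div (by omega), Nat.div_eq_of_lt hk]
    omega
  · intro i hi
    simp [Nat.div_add_mod]
  · rintro ⟨j, k⟩ hx
    rfl


lemma prod_range_mul_of_periodic {M : Type*} [CommMonoid M] (f : ℕ → M) (d c : ℕ)
    (hf : ∀ i, f (d + i) = f i) :
    ∏ i ∈ range (c * d), f i = (∏ r ∈ range d, f r) ^ c := by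
  have key : ∀ k r, f (k * d + r) = f r := by
    intro k
    induction k with
    | zero => simp
    | succ k ih =>
      intro r
      have : (k + 1) * d + r = d + (k * d + r) := by ring
      rw [this, hf, ih]
  induction c with
  | zero => simp
  | succ c ih =>
    rw [show (c + 1) * d = c * d + d by ring, prod_range_add, ih, pow_succ]
    congr 1
    exact prod_congr rfl fun r _ => key c r

lemma prod_one_sub_filter {p d : ℕ} (hp : p.Prime) (hd0 : d ≠ 0) {ζ : ℂ}
    (hζ : IsPrimitiveRoot ζ d) (hpd : p ∣ d) :
    ∏ r ∈ (range d).filter (fun r => ¬ p ∣ r), (1 - ζ ^ r) = p := by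
  have hp2 := hp.two_le
  obtain ⟨e, he⟩ := hpd
  have he1 : 1 ≤ e := Nat.pos_of_ne_zero (fun h => hd0 (by rw [he, h, mul_zero]))
  have hd1 : 1 ≤ d := Nat.pos_of_ne_zero hd0
  have hζ' : IsPrimitiveRoot ζ ((d - 1) + 1) := by rwa [Nat.sub_add_cancel hd1]
  have P_all := hζ'.prod_one_sub_pow_eq_order
  rw [← Finset.prod_filter_mul_prod_filter_not (range (d - 1)) (fun k => p ∣ (k + 1))] at P_all
  have hζp : IsPrimitiveRoot (ζ ^ p) ((e - 1) + 1) := by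
    rw [Nat.sub_add_cancel he1]
    exact hζ.pow (by omega) he
  have hB : ∏ k ∈ (range (d - 1)).filter (fun k => p ∣ (k + 1)), (1 - ζ ^ (k + 1)) = (e : ℂ) := by
    have heq := hζp.prod_one_sub_pow_eq_order
    rw [show ((e - 1 : ℕ) : ℂ) + 1 = (e : ℂ) by
      have : ((e - 1 : ℕ) : ℂ) = (e : ℂ) - 1 := by push_cast [he1]; ring
      rw [this]; ring] at heq
    rw [← heq]
    refine Finset.prod_nbij' (fun k => (k + 1) / p - 1) (fun k' => p * (k' + 1) - 1) ?_ ?_ ?_ ?_ ?_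
    · intro k hk
      simp only [mem_filter, mem_range] at hk ⊢
      obtain ⟨hk1, t, ht⟩ := hk
      have htp : t ≥ 1 := by
        rcases Nat.eq_zero_or_pos t with h | h
        · subst h; omega
        · exact h
      have h1 : (k + 1) / p = t := by rw [ht, Nat.mul_div_cancel_left _ (by omega : 0 < p)]
      rw [h1]
      have h2 : p * t < p * e := by omega
      have h3 : t < e := lt_of_mul_lt_mul_left h2 (by omega)
      omega
    · intro k' hk'
      simp only [mem_filter, mem_range] at hk' ⊢
      have hpk : 0 < p * (k' + 1) := Nat.mul_pos (by omega) (by omega)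
      have ha : p * (k' + 1) ≤ p * (e - 1) := Nat.mul_le_mul_left p (by omega)
      have hb : p * (e - 1) + p * 1 = p * e := by rw [← Nat.mul_add]; congr 1; omega
      constructor
      · omega
      · have h1 : p * (k' + 1) - 1 + 1 = p * (k' + 1) := by omega
        rw [h1]
        exact ⟨k' + 1, rfl⟩
    · intro k hk
      simp only [mem_filter, mem_range] at hk
      obtain ⟨hk1, t, ht⟩ := hk
      have htp : t ≥ 1 := by
        rcases Nat.eq_zero_or_pos t with h | h
        · subst h; omega
        · exact h
      have h1 : (k + 1) / p = t := by rw [ht, Nat.mul_div_cancel_left _ (by omega : 0 < p)]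
      rw [h1, Nat.sub_add_cancel htp]
      omega
    · intro k' hk'
      simp only [mem_range] at hk'
      have hpk : 0 < p * (k' + 1) := Nat.mul_pos (by omega) (by omega)
      have h1 : p * (k' + 1) - 1 + 1 = p * (k' + 1) := by omega
      rw [h1, Nat.mul_div_cancel_left _ (by omega : 0 < p)]
      omega
    · intro k hk
      simp only [mem_filter, mem_range] at hk
      obtain ⟨hk1, t, ht⟩ := hk
      have htp : t ≥ 1 := by
        rcases Nat.eq_zero_or_pos t with h | h
        · subst h; omega
        · exact h
      have h1 : (k + 1) / p = t := by rw [ht, Nat.mul_div_cancel_left _ (by omega : 0 < p)]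
      rw [h1]
      congr 1
      rw [← pow_mul]
      congr 1
      rw [Nat.sub_add_cancel htp]
      omega
  have hA : ∏ k ∈ (range (d - 1)).filter (fun k => ¬ p ∣ (k + 1)), (1 - ζ ^ (k + 1))
      = ∏ r ∈ (range d).filter (fun r => ¬ p ∣ r), (1 - ζ ^ r) := by
    refine Finset.prod_nbij' (fun k => k + 1) (fun r => r - 1) ?_ ?_ ?_ ?_ ?_
    · intro k hk
      simp only [mem_filter, mem_range] at hk ⊢
      exact ⟨by omega, hk.2⟩
    · intro r hr
      simp only [mem_filter, mem_range] at hr ⊢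
      have hr0 : r ≠ 0 := by
        rintro rfl
        exact hr.2 (dvd_zero p)
      constructor
      · omega
      · rw [Nat.sub_add_cancel (by omega)]
        exact hr.2
    · intro k _
      omega
    · intro r hr
      simp only [mem_filter, mem_range] at hr
      have hr0 : r ≠ 0 := by
        rintro rfl
        exact hr.2 (dvd_zero p)
      omega
    · intro k _
      rfl
  rw [hB, hA] at P_all
  have hde : ((d - 1 : ℕ) : ℂ) + 1 = (p : ℂ) * (e : ℂ) := by
    have h1 : ((d - 1 : ℕ) : ℂ) = (d : ℂ) - 1 := by push_cast [hd1]; ring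
    have h2 : (d : ℂ) = (p : ℂ) * (e : ℂ) := by rw [he]; push_cast; ring
    rw [h1, h2]; ring
  rw [hde] at P_all
  have he0 : (e : ℂ) ≠ 0 := by
    simpa using (by omega : e ≠ 0)
  exact mul_left_cancel₀ he0 (by rw [P_all]; ring)

lemma eval_filter_prod {p s : ℕ} (hp : p.Prime) {N d : ℕ} (hN : N ≠ 0) (hdN : d ∣ N) {ζ : ℂ}
    (hζ : IsPrimitiveRoot ζ d) (hpd : p ∣ d) :
    ∏ i ∈ (range N).filter (fun i => ¬ p ∣ i), (1 - ζ ^ i) ^ s = (p : ℂ) ^ (s * (N / d)) := by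
  have hd0 : d ≠ 0 := by rintro rfl; exact hN (Nat.eq_zero_of_zero_dvd hdN)
  have hper : ∀ i, (if ¬ p ∣ (d + i) then (1 - ζ ^ (d + i)) ^ s else 1)
      = (if ¬ p ∣ i then (1 - ζ ^ i) ^ s else 1) := by
    intro i
    have h1 : ζ ^ (d + i) = ζ ^ i := by rw [pow_add, hζ.pow_eq_one, one_mul]
    have h2 : (p ∣ (d + i)) ↔ (p ∣ i) := by
      constructor
      · intro h; exact (Nat.dvd_add_right hpd).mp h
      · intro h; exact Nat.dvd_add hpd h
    rw [h1]
    by_cases h : p ∣ i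
    · rw [if_neg (by simpa [h2] using not_not_intro h), if_neg (not_not_intro h)]
    · rw [if_pos (by simpa [h2] using h), if_pos h]
  have hNd : N = (N / d) * d := (Nat.div_mul_cancel hdN).symm
  calc ∏ i ∈ (range N).filter (fun i => ¬ p ∣ i), (1 - ζ ^ i) ^ s
      = ∏ i ∈ range ((N / d) * d), (if ¬ p ∣ i then (1 - ζ ^ i) ^ s else 1) := by
        rw [Finset.prod_filter, ← hNd]
    _ = (∏ r ∈ range d, (if ¬ p ∣ r then (1 - ζ ^ r) ^ s else 1)) ^ (N / d) :=
        prod_range_mul_of_periodic _ d (N / d) hper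
    _ = ((∏ r ∈ (range d).filter (fun r => ¬ p ∣ r), (1 - ζ ^ r)) ^ s) ^ (N / d) := by
        rw [← Finset.prod_filter, Finset.prod_pow]
    _ = (p : ℂ) ^ (s * (N / d)) := by
        rw [prod_one_sub_filter hp hd0 hζ hpd, pow_mul]


lemma isPrimitiveRoot_pow_gcd {N : ℕ} (hN : N ≠ 0) {ω : ℂ} (hω : IsPrimitiveRoot ω N) (j : ℕ) :
    IsPrimitiveRoot (ω ^ j) (N / Nat.gcd j N) := by
  rcases Nat.eq_zero_or_pos j with rfl | hj
  · simp [Nat.gcd_zero_left, Nat.div_self (Nat.pos_of_ne_zero hN)]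
  · set g := Nat.gcd j N with hg
    have hg0 : 0 < g := Nat.gcd_pos_of_pos_left _ hj
    have hgN : g ∣ N := Nat.gcd_dvd_right j N
    have hgj : g ∣ j := Nat.gcd_dvd_left j N
    have hprod : N = g * (N / g) := (Nat.mul_div_cancel' hgN).symm
    have h1 : IsPrimitiveRoot (ω ^ g) (N / g) := hω.pow (Nat.pos_of_ne_zero hN) hprod
    have h2 : (j / g).Coprime (N / g) := Nat.coprime_div_gcd_div_gcd hg0
    have h3 := h1.pow_of_coprime (j / g) h2
    rwa [← pow_mul, Nat.mul_div_cancel' hgj] at h3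

lemma eval_filter_prod_zero {p s N d : ℕ} (hs : s ≠ 0) (hpN : p ∣ N) (hdN : d ∣ N) (hN : N ≠ 0)
    {ζ : ℂ} (hζ : ζ ^ d = 1) (hpd : ¬ p ∣ d) :
    ∏ i ∈ (range N).filter (fun i => ¬ p ∣ i), (1 - ζ ^ i) ^ s = 0 := by
  have hdN' : d ≤ N := Nat.le_of_dvd (Nat.pos_of_ne_zero hN) hdN
  have hdne : d ≠ N := by rintro rfl; exact hpd hpN
  refine Finset.prod_eq_zero (i := d) ?_ ?_
  · simp only [mem_filter, mem_range]
    exact ⟨by omega, hpd⟩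
  · rw [hζ, sub_self, zero_pow hs]

lemma sum_pow_root {N : ℕ} (hN : N ≠ 0) {ω : ℂ} (hω : IsPrimitiveRoot ω N) (k : ℕ) :
    ∑ j ∈ range N, (ω ^ k) ^ j = if N ∣ k then (N : ℂ) else 0 := by
  by_cases h : N ∣ k
  · rw [if_pos h, (hω.pow_eq_one_iff_dvd k).mpr h]
    simp
  · rw [if_neg h]
    have h1 : ω ^ k ≠ 1 := fun hc => h ((hω.pow_eq_one_iff_dvd k).mp hc)
    rw [geom_sum_eq h1]
    rw [← pow_mul, mul_comm, pow_mul, hω.pow_eq_one, one_pow, sub_self, zero_div]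

lemma sum_Icc_pow_eq_neg_one {p : ℕ} (hp : 1 ≤ p) {z : ℂ} (hz : z ^ p = 1) (hz1 : z ≠ 1) :
    ∑ u ∈ Icc 1 (p - 1), z ^ u = -1 := by
  have h0 : ∑ j ∈ range p, z ^ j = 0 := by
    rw [geom_sum_eq hz1, hz, sub_self, zero_div]
  have h1 : ∑ j ∈ range ((p - 1) + 1), z ^ j = (∑ i ∈ range (p - 1), z ^ (i + 1)) + z ^ 0 :=
    Finset.sum_range_succ' _ _
  rw [show (p - 1) + 1 = p by omega] at h1
  have h2 : ∑ u ∈ Icc 1 (p - 1), z ^ u = ∑ i ∈ range (p - 1), z ^ (1 + i) := by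
    rw [show Icc 1 (p - 1) = Ico 1 p by rw [← Finset.Ico_add_one_right_eq_Icc]; congr 1; omega,
      Finset.sum_Ico_eq_sum_range]
  have h3 : ∑ i ∈ range (p - 1), z ^ (1 + i) = ∑ i ∈ range (p - 1), z ^ (i + 1) :=
    Finset.sum_congr rfl fun i _ => by rw [add_comm]
  rw [h2, h3]
  rw [h0] at h1
  simp only [pow_zero] at h1
  linear_combination -h1






lemma borweinPoly_natDegree_lt (p s n b : ℕ) (hp3 : 3 ≤ p) :
    (borweinPoly p s n).natDegree < b + (borweinDeg p s n + 1) * (p * (n + 1)) := by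
  set N := p * (n + 1) with hN
  have hN1 : 1 ≤ N := by
    have := Nat.mul_pos (show 0 < p by omega) (show 0 < n + 1 by omega)
    omega
  have per_k : ∀ j, j < n + 1 → ∀ k ∈ Finset.Icc 1 (p - 1),
      ((1 - (X : ℤ[X]) ^ (p * j + k)) ^ s).natDegree ≤ s * N := by
    intro j hj k hk
    simp only [Finset.mem_Icc] at hk
    refine le_trans (Polynomial.natDegree_pow_le) ?_
    have h1 : (1 - (X : ℤ[X]) ^ (p * j + k)).natDegree ≤ p * j + k := by
      refine le_trans (Polynomial.natDegree_sub_le _ _) ?_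
      simp [Polynomial.natDegree_X_pow]
    refine le_trans (Nat.mul_le_mul_left s h1) ?_
    refine Nat.mul_le_mul_left s ?_
    have : p * j + k ≤ p * n + (p - 1) := by
      have := Nat.mul_le_mul_left p (by omega : j ≤ n)
      omega
    have h2 : p * n + p = p * (n + 1) := by ring
    omega
  have h1 : (borweinPoly p s n).natDegree ≤ (n + 1) * ((p - 1) * (s * N)) := by
    refine le_trans (Polynomial.natDegree_prod_le _ _) ?_
    have inner : ∀ j ∈ Finset.range (n + 1),
        (∏ k ∈ Finset.Icc 1 (p - 1), (1 - (X : ℤ[X]) ^ (p * j + k)) ^ s).natDegree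
          ≤ (p - 1) * (s * N) := by
      intro j hj
      simp only [Finset.mem_range] at hj
      refine le_trans (Polynomial.natDegree_prod_le _ _) ?_
      refine le_trans (Finset.sum_le_card_nsmul _ _ (s * N) (per_k j hj)) ?_
      simp [Nat.card_Icc]
    refine le_trans (Finset.sum_le_card_nsmul _ _ ((p - 1) * (s * N)) inner) ?_
    simp
  have h2 : (n + 1) * ((p - 1) * (s * N)) ≤ borweinDeg p s n * N := by
    have heq : (n + 1) * ((p - 1) * (s * N)) = ((p - 1) * s * (n + 1)) * N := by ring
    rw [heq]
    refine Nat.mul_le_mul_right N ?_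
    rw [borweinDeg]
    rw [Nat.le_div_iff_mul_le (by norm_num)]
    have heq2 : p * (p - 1) * s * (n + 1) ^ 2 = (p * (n + 1)) * ((p - 1) * s * (n + 1)) := by ring
    rw [heq2]
    have h5 : 2 ≤ p * (n + 1) := by nlinarith
    calc (p - 1) * s * (n + 1) * 2 = 2 * ((p - 1) * s * (n + 1)) := by ring
      _ ≤ (p * (n + 1)) * ((p - 1) * s * (n + 1)) :=
          Nat.mul_le_mul_right ((p - 1) * s * (n + 1)) h5
  have h3 : borweinDeg p s n * N < b + (borweinDeg p s n + 1) * N := by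
    have : (borweinDeg p s n + 1) * N = borweinDeg p s n * N + N := by ring
    omega
  omega

lemma sum_pow_root' {N : ℕ} (hN : N ≠ 0) {ω : ℂ} (hω : IsPrimitiveRoot ω N) (k : ℕ) :
    ∑ j ∈ range N, (ω ^ k) ^ j = if N ∣ k then (N : ℂ) else 0 := by
  by_cases h : N ∣ k
  · rw [if_pos h, (hω.pow_eq_one_iff_dvd k).mpr h]
    simp
  · rw [if_neg h]
    have h1 : ω ^ k ≠ 1 := fun hc => h ((hω.pow_eq_one_iff_dvd k).mp hc)
    rw [geom_sum_eq h1]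
    rw [← pow_mul, mul_comm, pow_mul, hω.pow_eq_one, one_pow, sub_self, zero_div]

lemma main_identity (p s n b : ℕ) (hp3 : 3 ≤ p) (hb : b < p * (n + 1)) {ω : ℂ}
    (hω : IsPrimitiveRoot ω (p * (n + 1))) :
    ((p * (n + 1) : ℕ) : ℂ) * ((borweinM p s n b : ℤ) : ℂ) =
      ∑ j ∈ range (p * (n + 1)),
        ω ^ (j * (p * (n + 1) - b)) * eval₂ (Int.castRingHom ℂ) (ω ^ j) (borweinPoly p s n) := by
  set N := p * (n + 1) with hN
  have hN1 : 1 ≤ N := by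
    have := Nat.mul_pos (show 0 < p by omega) (show 0 < n + 1 by omega)
    omega
  have hN0 : N ≠ 0 := by omega
  set D := b + (borweinDeg p s n + 1) * N with hD
  have hdeg : (borweinPoly p s n).natDegree < D := borweinPoly_natDegree_lt p s n b hp3
  have expand : ∀ j : ℕ, eval₂ (Int.castRingHom ℂ) (ω ^ j) (borweinPoly p s n)
      = ∑ i ∈ range D, ((borweinCoeff p s n i : ℤ) : ℂ) * (ω ^ j) ^ i := by
    intro j
    rw [Polynomial.eval₂_eq_sum_range' (Int.castRingHom ℂ) hdeg (ω ^ j)]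
    rfl
  symm
  calc ∑ j ∈ range N, ω ^ (j * (N - b)) * eval₂ (Int.castRingHom ℂ) (ω ^ j) (borweinPoly p s n)
      = ∑ j ∈ range N, ∑ i ∈ range D,
          ((borweinCoeff p s n i : ℤ) : ℂ) * (ω ^ ((N - b) + i)) ^ j := by
        refine Finset.sum_congr rfl fun j _ => ?_
        rw [expand j, Finset.mul_sum]
        refine Finset.sum_congr rfl fun i _ => ?_
        rw [← pow_mul, ← pow_mul]
        rw [show (N - b + i) * j = j * (N - b) + j * i by ring, pow_add]
        ring
    _ = ∑ i ∈ range D, ((borweinCoeff p s n i : ℤ) : ℂ)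
          * (if N ∣ (N - b) + i then (N : ℂ) else 0) := by
        rw [Finset.sum_comm]
        refine Finset.sum_congr rfl fun i _ => ?_
        rw [← Finset.mul_sum, sum_pow_root' hN0 hω]
    _ = ∑ i ∈ (range D).filter (fun i => N ∣ (N - b) + i),
          (((borweinCoeff p s n i : ℤ) : ℂ) * (N : ℂ)) := by
        simp only [mul_ite, mul_zero]
        rw [← Finset.sum_filter]
    _ = (∑ i ∈ (range D).filter (fun i => N ∣ (N - b) + i),
          ((borweinCoeff p s n i : ℤ) : ℂ)) * (N : ℂ) := by rw [← Finset.sum_mul]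
    _ = ((borweinM p s n b : ℤ) : ℂ) * (N : ℂ) := by
        congr 1
        have key : ∀ i ∈ (range D).filter (fun i => N ∣ (N - b) + i),
            b + ((i - b) / N) * N = i ∧ (i - b) / N < borweinDeg p s n + 1 := by
          intro i hi
          simp only [mem_filter, mem_range] at hi
          obtain ⟨hiD, c, hc⟩ := hi
          have hc1 : 1 ≤ c := by
            rcases Nat.eq_zero_or_pos c with h | h
            · subst h; omega
            · exact h
          have hc' : N * (c - 1) + N = N * c := by
            rw [← Nat.mul_succ]; congr 1; omega
          have hieq : i = N * (c - 1) + b := by omega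
          have hdivq : (i - b) / N = c - 1 := by
            rw [show i - b = N * (c - 1) by omega, Nat.mul_div_cancel_left _ (by omega : 0 < N)]
          constructor
          · rw [hdivq]
            have : (c - 1) * N = N * (c - 1) := Nat.mul_comm _ _
            omega
          · rw [hdivq]
            by_contra hcon
            push_neg at hcon
            have h6 : N * (borweinDeg p s n + 1) ≤ N * (c - 1) := Nat.mul_le_mul_left N hcon
            have h7 : (borweinDeg p s n + 1) * N = N * (borweinDeg p s n + 1) :=
              Nat.mul_comm _ _
            omega
        rw [borweinM]
        push_cast
        refine Finset.sum_nbij' (fun i => (i - b) / N) (fun l => b + l * N) ?_ ?_ ?_ ?_ ?_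
        · intro i hi
          simp only [mem_range]
          exact (key i hi).2
        · intro l hl
          simp only [mem_range] at hl
          simp only [mem_filter, mem_range]
          have h8 : l * N < (borweinDeg p s n + 1) * N :=
            (Nat.mul_lt_mul_right (by omega : 0 < N)).mpr hl
          constructor
          · omega
          · refine ⟨1 + l, ?_⟩
            have : N * (1 + l) = N + l * N := by ring
            omega
        · intro i hi
          exact (key i hi).1
        · intro l hl
          rw [Nat.add_sub_cancel_left, Nat.mul_div_cancel _ (by omega : 0 < N)]
        · intro i hi
          rw [(key i hi).1]
    _ = ((p * (n + 1) : ℕ) : ℂ) * ((borweinM p s n b : ℤ) : ℂ) := by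
        rw [← hN]; ring

set_option maxHeartbeats 1000000 in
theorem stmt_2 (p s n b : ℕ) (hp : p.Prime) (hp3 : 3 ≤ p) (hs : 1 ≤ s)
    (hb : b < p * (n + 1)) (hpb : ¬ p ∣ b)
    (hgt : (p : ℝ) ^ (((s : ℝ) * ((n : ℝ) + 1)) / 2 - 1) > (n : ℝ) + 1) :
    borweinM p s n b < 0 := by
  have hp2 := hp.two_le
  have hN1 : 1 ≤ p * (n + 1) := Nat.mul_pos (by omega) (by omega)
  have hN0 : p * (n + 1) ≠ 0 := by omega
  have hpN : p ∣ p * (n + 1) := ⟨n + 1, rfl⟩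
  obtain ⟨ω, hω⟩ : ∃ ω : ℂ, IsPrimitiveRoot ω (p * (n + 1)) :=
    ⟨_, Complex.isPrimitiveRoot_exp _ hN0⟩
  have hnormω : ‖ω‖ = 1 := Complex.norm_eq_one_of_pow_eq_one hω.pow_eq_one hN0
  -- evaluation of the polynomial at powers of ω
  have hEval : ∀ j : ℕ, eval₂ (Int.castRingHom ℂ) (ω ^ j) (borweinPoly p s n)
      = ∏ i ∈ (range (p * (n + 1))).filter (fun i => ¬ p ∣ i), (1 - (ω ^ j) ^ i) ^ s := by
    intro j
    rw [borweinPoly_eq_filter p s n hp, eval₂_finset_prod]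
    exact Finset.prod_congr rfl fun i _ => by
      rw [eval₂_pow, eval₂_sub, eval₂_one, eval₂_X_pow]
  -- the special set of indices of order exactly p
  set Jp := (Finset.Icc 1 (p - 1)).image (fun u => u * (n + 1)) with hJpdef
  have hJpsub : Jp ⊆ range (p * (n + 1)) := by
    intro j hj
    simp only [hJpdef, Finset.mem_image, Finset.mem_Icc] at hj
    obtain ⟨u, ⟨hu1, hu2⟩, rfl⟩ := hj
    simp only [Finset.mem_range]
    exact (Nat.mul_lt_mul_right (by omega : 0 < n + 1)).mpr (by omega)
  have hξ : IsPrimitiveRoot (ω ^ (n + 1)) p := hω.pow (by omega) (by ring)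
  -- Part A : the sum over Jp
  have hA : ∑ j ∈ Jp, ω ^ (j * (p * (n + 1) - b)) *
        eval₂ (Int.castRingHom ℂ) (ω ^ j) (borweinPoly p s n)
      = -((p : ℂ) ^ (s * (n + 1))) := by
    rw [hJpdef, Finset.sum_image (fun x _ y _ h => Nat.eq_of_mul_eq_mul_right (by omega) h)]
    have hterm : ∀ u ∈ Finset.Icc 1 (p - 1),
        ω ^ ((u * (n + 1)) * (p * (n + 1) - b)) *
          eval₂ (Int.castRingHom ℂ) (ω ^ (u * (n + 1))) (borweinPoly p s n)
        = ((ω ^ (n + 1)) ^ (p * (n + 1) - b)) ^ u * (p : ℂ) ^ (s * (n + 1)) := by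
      intro u hu
      simp only [Finset.mem_Icc] at hu
      have hcop : Nat.Coprime u p := by
        rw [Nat.coprime_comm]
        refine (Nat.Prime.coprime_iff_not_dvd hp).mpr ?_
        intro hd
        have := Nat.le_of_dvd (by omega) hd
        omega
      have hζu : IsPrimitiveRoot ((ω ^ (n + 1)) ^ u) p := hξ.pow_of_coprime u hcop
      have hpow : ω ^ (u * (n + 1)) = (ω ^ (n + 1)) ^ u := by
        rw [← pow_mul, mul_comm (n + 1) u]
      have hE : eval₂ (Int.castRingHom ℂ) (ω ^ (u * (n + 1))) (borweinPoly p s n)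
          = (p : ℂ) ^ (s * (n + 1)) := by
        rw [hEval, hpow]
        have := eval_filter_prod (s := s) hp hN0 hpN hζu dvd_rfl
        rwa [Nat.mul_div_cancel_left (n + 1) (by omega : 0 < p)] at this
      rw [hE]
      congr 1
      rw [← pow_mul, ← pow_mul]
      congr 1
      ring
    rw [Finset.sum_congr rfl hterm, ← Finset.sum_mul]
    have hz1 : ((ω ^ (n + 1)) ^ (p * (n + 1) - b)) ≠ 1 := by
      intro hc
      have hdvd := (hξ.pow_eq_one_iff_dvd _).mp hc
      have : p ∣ b := by
        have hsub : p * (n + 1) - (p * (n + 1) - b) = b := by omega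
        have := Nat.dvd_sub hpN hdvd
        rwa [hsub] at this
      exact hpb this
    have hzp : ((ω ^ (n + 1)) ^ (p * (n + 1) - b)) ^ p = 1 := by
      rw [← pow_mul, mul_comm (p * (n + 1) - b) p, pow_mul, hξ.pow_eq_one, one_pow]
    rw [sum_Icc_pow_eq_neg_one (by omega) hzp hz1]
    ring
  -- Part B : bound on the remaining sum
  have hbound : ∀ j ∈ range (p * (n + 1)) \ Jp,
      ‖ω ^ (j * (p * (n + 1) - b)) *
        eval₂ (Int.castRingHom ℂ) (ω ^ j) (borweinPoly p s n)‖
      ≤ (p : ℝ) ^ (s * ((n + 1) / 2)) := by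
    intro j hj
    simp only [Finset.mem_sdiff, Finset.mem_range] at hj
    obtain ⟨hjN, hjJp⟩ := hj
    have hp1R : (1 : ℝ) ≤ (p : ℝ) := by exact_mod_cast (by omega : 1 ≤ p)
    rw [norm_mul, norm_pow, hnormω, one_pow, one_mul]
    have hζ : IsPrimitiveRoot (ω ^ j) ((p * (n + 1)) / Nat.gcd j (p * (n + 1))) :=
      isPrimitiveRoot_pow_gcd hN0 hω j
    set g := Nat.gcd j (p * (n + 1)) with hgdef
    set d := (p * (n + 1)) / g with hddef
    have hgdvd : g ∣ p * (n + 1) := Nat.gcd_dvd_right _ _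
    have hgpos : 1 ≤ g := by
      rcases Nat.eq_zero_or_pos j with rfl | hj0
      · rw [hgdef]; simp only [Nat.gcd_zero_left]; omega
      · exact Nat.gcd_pos_of_pos_left _ hj0
    have hgle : g ≤ p * (n + 1) := Nat.le_of_dvd (by omega) hgdvd
    have hdN : d ∣ p * (n + 1) := Nat.div_dvd_of_dvd hgdvd
    have hdpos : 1 ≤ d := Nat.div_pos hgle (by omega)
    by_cases hpd : p ∣ d
    · -- d is a proper multiple of p
      have hj0 : j ≠ 0 := by
        rintro rfl
        rw [hgdef] at hddef
        simp only [Nat.gcd_zero_left] at hddef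
        rw [Nat.div_self (by omega : 0 < p * (n + 1))] at hddef
        rw [hddef] at hpd
        have := Nat.le_of_dvd (by omega) hpd
        omega
      have hdne : d ≠ p := by
        intro hdp
        have hgNp : g = (n + 1) := by
          have h1 : (p * (n + 1)) / ((p * (n + 1)) / g) = g :=
            Nat.div_div_self hgdvd hN0
          rw [← hddef, hdp, Nat.mul_div_cancel_left (n + 1) (by omega : 0 < p)] at h1
          omega
        have hgj : g ∣ j := Nat.gcd_dvd_left _ _
        obtain ⟨u, hu⟩ := hgj
        have hu1 : 1 ≤ u := by
          rcases Nat.eq_zero_or_pos u with rfl | h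
          · rw [mul_zero] at hu; omega
          · exact h
        have hup : u < p := by
          by_contra hc
          push_neg at hc
          have h2 : g * p ≤ g * u := Nat.mul_le_mul_left g hc
          rw [hgNp] at h2 hu
          have h3 : (n + 1) * p = p * (n + 1) := by ring
          omega
        apply hjJp
        rw [hJpdef]
        simp only [Finset.mem_image, Finset.mem_Icc]
        exact ⟨u, ⟨by omega, by omega⟩, by rw [hu, hgNp, mul_comm]⟩
      obtain ⟨e', he'⟩ := hpd
      have he'pos : 1 ≤ e' := by
        rcases Nat.eq_zero_or_pos e' with rfl | h
        · rw [mul_zero] at he'; omega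
        · exact h
      have he'2 : 2 ≤ e' := by
        rcases Nat.lt_or_ge e' 2 with h | h
        · interval_cases e'
          rw [mul_one] at he'; exact absurd he' hdne
        · exact h
      have he'm : e' ∣ (n + 1) := by
        have : p * e' ∣ p * (n + 1) := by rw [← he']; exact hdN
        exact (Nat.mul_dvd_mul_iff_left (by omega : 0 < p)).mp this
      have hNd : (p * (n + 1)) / d = (n + 1) / e' := by
        rw [he', Nat.mul_div_mul_left _ _ (by omega : 0 < p)]
      have hle : (n + 1) / e' ≤ (n + 1) / 2 := by
        rw [Nat.le_div_iff_mul_le (by norm_num : 0 < 2)]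
        have h1 : ((n + 1) / e') * e' = n + 1 := Nat.div_mul_cancel he'm
        have h2 : ((n + 1) / e') * 2 ≤ ((n + 1) / e') * e' :=
          Nat.mul_le_mul_left _ he'2
        omega
      have hE : eval₂ (Int.castRingHom ℂ) (ω ^ j) (borweinPoly p s n)
          = (p : ℂ) ^ (s * ((p * (n + 1)) / d)) := by
        rw [hEval]
        exact eval_filter_prod hp hN0 hdN hζ ⟨e', he'⟩
      rw [hE]
      rw [norm_pow]
      have hnp : ‖(p : ℂ)‖ = (p : ℝ) := by
        rw [Complex.norm_natCast]
      rw [hnp]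
      apply pow_le_pow_right₀ hp1R
      rw [hNd]
      exact Nat.mul_le_mul_left s hle
    · -- the evaluation vanishes
      have hE : eval₂ (Int.castRingHom ℂ) (ω ^ j) (borweinPoly p s n) = 0 := by
        rw [hEval]
        exact eval_filter_prod_zero (by omega) hpN hdN hN0 hζ.pow_eq_one hpd
      rw [hE, norm_zero]
      positivity
  -- assemble
  have hid := main_identity p s n b hp3 hb hω
  rw [← Finset.sum_sdiff hJpsub, hA] at hid
  set R := ∑ j ∈ range (p * (n + 1)) \ Jp, ω ^ (j * (p * (n + 1) - b)) *
      eval₂ (Int.castRingHom ℂ) (ω ^ j) (borweinPoly p s n) with hRdef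
  have hRnorm : ‖R‖ ≤ ((p * (n + 1) : ℕ) : ℝ) * (p : ℝ) ^ (s * ((n + 1) / 2)) := by
    refine le_trans (norm_sum_le _ _) ?_
    refine le_trans (Finset.sum_le_card_nsmul _ _ _ hbound) ?_
    rw [nsmul_eq_mul]
    have hcard : ((range (p * (n + 1)) \ Jp).card : ℝ) ≤ ((p * (n + 1) : ℕ) : ℝ) := by
      have := Finset.card_le_card (Finset.sdiff_subset (s := range (p * (n + 1))) (t := Jp))
      rw [Finset.card_range] at this
      exact_mod_cast this
    have hPpos : (0 : ℝ) ≤ (p : ℝ) ^ (s * ((n + 1) / 2)) := by positivity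
    exact mul_le_mul_of_nonneg_right hcard hPpos
  -- numeric inequality
  have hp0R : (0 : ℝ) < (p : ℝ) := by positivity
  have hp1R : (1 : ℝ) < (p : ℝ) := by exact_mod_cast (by omega : 1 < p)
  have hx : ((p : ℝ)) ^ (((s : ℝ) * ((n : ℝ) + 1)) / 2) > (p : ℝ) * ((n : ℝ) + 1) := by
    have h1 : (p : ℝ) ^ (((s : ℝ) * ((n : ℝ) + 1)) / 2 - 1)
        = (p : ℝ) ^ (((s : ℝ) * ((n : ℝ) + 1)) / 2) / (p : ℝ) := by
      rw [Real.rpow_sub hp0R, Real.rpow_one]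
    rw [h1] at hgt
    have := (lt_div_iff₀ hp0R).mp hgt
    nlinarith [this]
  have hsplit : s * ((n + 1) / 2) + s * ((n + 1) - (n + 1) / 2) = s * (n + 1) := by
    rw [← Nat.mul_add]
    congr 1
    omega
  have hBige : ((s * ((n + 1) - (n + 1) / 2) : ℕ) : ℝ) ≥ ((s : ℝ) * ((n : ℝ) + 1)) / 2 := by
    have h2 : s * (n + 1) ≤ 2 * (s * ((n + 1) - (n + 1) / 2)) := by
      have h3 : (n + 1) ≤ 2 * ((n + 1) - (n + 1) / 2) := by omega
      calc s * (n + 1) ≤ s * (2 * ((n + 1) - (n + 1) / 2)) := Nat.mul_le_mul_left s h3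
        _ = 2 * (s * ((n + 1) - (n + 1) / 2)) := by ring
    have h4 : ((s * (n + 1) : ℕ) : ℝ) ≤ 2 * ((s * ((n + 1) - (n + 1) / 2) : ℕ) : ℝ) := by
      exact_mod_cast h2
    push_cast at h4 ⊢
    linarith
  have hpB : (p : ℝ) ^ (s * ((n + 1) - (n + 1) / 2)) > (p : ℝ) * ((n : ℝ) + 1) := by
    have h5 : (p : ℝ) ^ ((s * ((n + 1) - (n + 1) / 2) : ℕ) : ℝ)
        ≥ (p : ℝ) ^ (((s : ℝ) * ((n : ℝ) + 1)) / 2) := by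
      apply Real.rpow_le_rpow_of_exponent_le (le_of_lt hp1R) hBige
    rw [Real.rpow_natCast] at h5
    linarith
  have hnumeric : ((p * (n + 1) : ℕ) : ℝ) * (p : ℝ) ^ (s * ((n + 1) / 2))
      < (p : ℝ) ^ (s * (n + 1)) := by
    have h6 : (p : ℝ) ^ (s * (n + 1))
        = (p : ℝ) ^ (s * ((n + 1) / 2)) * (p : ℝ) ^ (s * ((n + 1) - (n + 1) / 2)) := by
      rw [← pow_add, hsplit]
    rw [h6]
    have h7 : ((p * (n + 1) : ℕ) : ℝ) = (p : ℝ) * ((n : ℝ) + 1) := by push_cast; ring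
    rw [h7]
    have hPpos : (0 : ℝ) < (p : ℝ) ^ (s * ((n + 1) / 2)) := by positivity
    calc (p : ℝ) * ((n : ℝ) + 1) * (p : ℝ) ^ (s * ((n + 1) / 2))
        = (p : ℝ) ^ (s * ((n + 1) / 2)) * ((p : ℝ) * ((n : ℝ) + 1)) := by ring
      _ < (p : ℝ) ^ (s * ((n + 1) / 2)) * (p : ℝ) ^ (s * ((n + 1) - (n + 1) / 2)) := by
          exact mul_lt_mul_of_pos_left hpB hPpos
  -- take real parts
  have hcast : ((p * (n + 1) : ℕ) : ℂ) * ((borweinM p s n b : ℤ) : ℂ)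
      = (((p * (n + 1) : ℕ) * borweinM p s n b : ℤ) : ℂ) := by push_cast; ring
  rw [hcast] at hid
  have hre := congrArg Complex.re hid
  rw [Complex.intCast_re, Complex.add_re, Complex.neg_re] at hre
  have hppow : ((p : ℂ) ^ (s * (n + 1))).re = (p : ℝ) ^ (s * (n + 1)) := by
    rw [show ((p : ℂ)) = (((p : ℝ) : ℂ)) by push_cast; rfl, ← Complex.ofReal_pow,
      Complex.ofReal_re]
  rw [hppow] at hre
  have hRre : R.re ≤ ‖R‖ := Complex.re_le_norm R
  have hfinal : (((p * (n + 1) : ℕ) * borweinM p s n b : ℤ) : ℝ) < 0 := by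
    rw [hre]
    have := le_trans hRre hRnorm
    linarith
  have hfinal' : ((p * (n + 1) : ℕ) : ℤ) * borweinM p s n b < 0 := by exact_mod_cast hfinal
  by_contra hcon
  push_neg at hcon
  have : 0 ≤ ((p * (n + 1) : ℕ) : ℤ) * borweinM p s n b := by
    apply mul_nonneg _ hcon
    exact_mod_cast Nat.zero_le _
  omega
end

section
/- For p = 3, s = 1: for every integer n ≥ 1 and every integer b with 0 ≤ b < 3(n+1) and b ≡ 1 or 2 (mod 3), one has M_{3,1,n}(b) < 0. -/
open Polynomial Finset

open Complex

section Helpers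



/-- For a primitive `e`-th root of unity `u` in `ℂ`, `∏_{j<e} (z - u^j) = z^e - 1`. -/
lemma prod_sub_pow_eq {u : ℂ} {e : ℕ} (he : 0 < e) (hu : IsPrimitiveRoot u e) (z : ℂ) :
    ∏ j ∈ range e, (z - u ^ j) = z ^ e - 1 := by
  have him : (range e).image (u ^ ·) = nthRootsFinset e (1 : ℂ) := by
    apply Finset.eq_of_subset_of_card_le
    · intro x hx
      simp only [Finset.mem_image, mem_range] at hx
      obtain ⟨j, hj, rfl⟩ := hx
      rw [Polynomial.mem_nthRootsFinset he, ← pow_mul, mul_comm, pow_mul, hu.pow_eq_one, one_pow]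
    · rw [hu.card_nthRootsFinset, Finset.card_image_of_injOn]
      · simp
      · intro i hi j hj hij
        exact hu.pow_inj (by simpa using hi) (by simpa using hj) hij
  have := congrArg (Polynomial.eval z) (X_pow_sub_one_eq_prod he hu)
  simp only [eval_sub, eval_pow, eval_X, eval_one, eval_prod, eval_C] at this
  rw [this, ← him, Finset.prod_image]
  intro i hi j hj hij
  exact hu.pow_inj (by simpa using hi) (by simpa using hj) hij

/-- For a primitive `e`-th root of unity `u` in `ℂ`, `∏_{j<e} (1 - z·u^j) = 1 - z^e`. -/
lemma prod_one_sub_mul_pow {u : ℂ} {e : ℕ} (he : 0 < e) (hu : IsPrimitiveRoot u e) (z : ℂ) :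
    ∏ j ∈ range e, (1 - z * u ^ j) = 1 - z ^ e := by
  rcases eq_or_ne z 0 with rfl | hz
  · simp [he.ne']
  · have h1 : ∀ j, 1 - z * u ^ j = z * (z⁻¹ - u ^ j) := by
      intro j; field_simp
    calc ∏ j ∈ range e, (1 - z * u ^ j) = ∏ j ∈ range e, (z * (z⁻¹ - u ^ j)) := by
          simp_rw [h1]
      _ = z ^ e * ∏ j ∈ range e, (z⁻¹ - u ^ j) := by
          rw [Finset.prod_mul_distrib, Finset.prod_const, Finset.card_range]
      _ = z ^ e * ((z⁻¹) ^ e - 1) := by rw [prod_sub_pow_eq he hu]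
      _ = 1 - z ^ e := by
          rw [mul_sub, ← mul_pow, mul_inv_cancel₀ hz, one_pow, mul_one]

/-- Product of a periodic function over `range (e * g)`. -/
lemma prod_range_mul_of_periodic_s3 (f : ℕ → ℂ) (e g : ℕ) (hf : ∀ j, f (j + e) = f j) :
    ∏ j ∈ range (e * g), f j = (∏ j ∈ range e, f j) ^ g := by
  have hshift : ∀ c j, f (j + e * c) = f j := by
    intro c
    induction c with
    | zero => simp
    | succ c ih =>
      intro j
      have : j + e * (c + 1) = (j + e * c) + e := by ring
      rw [this, hf, ih]
  induction g with
  | zero => simp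
  | succ g ih =>
    rw [Nat.mul_succ, Finset.prod_range_add, ih, pow_succ]
    congr 1
    apply Finset.prod_congr rfl
    intro j _
    rw [add_comm (e * g) j, hshift]


lemma borwein_eval_zero {ζ : ℂ} {m N t : ℕ} (hm : 0 < m) (hN : N = 3 * m)
    (hζ : IsPrimitiveRoot ζ N) (hnd : ¬ Nat.gcd t N ∣ m) :
    ∏ j ∈ range m, ((1 - (ζ ^ t) ^ (3 * j + 1)) * (1 - (ζ ^ t) ^ (3 * j + 2))) = 0 := by
  obtain ⟨g, hgdef⟩ : ∃ g, Nat.gcd t N = g := ⟨_, rfl⟩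
  have hN0 : 0 < N := by omega
  have hgN : g ∣ N := hgdef ▸ Nat.gcd_dvd_right t N
  have hgt : g ∣ t := hgdef ▸ Nat.gcd_dvd_left t N
  have hg0 : 0 < g := hgdef ▸ Nat.gcd_pos_of_pos_right t hN0
  obtain ⟨d, hgd⟩ := hgN
  have h3d : ¬ 3 ∣ d := by
    rintro ⟨c, rfl⟩
    have h3m : 3 * m = 3 * (g * c) := by rw [← hN, hgd]; ring
    exact (hgdef ▸ hnd) ⟨c, by omega⟩
  have hd0 : 0 < d := by
    rcases Nat.eq_zero_or_pos d with rfl | h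
    · omega
    · exact h
  have hg1 : g ≠ 1 := by
    rintro rfl
    exact (hgdef ▸ hnd) (one_dvd m)
  have hdN : d < N := by
    have hg2 : 2 ≤ g := by omega
    have : 2 * d ≤ g * d := Nat.mul_le_mul_right d hg2
    omega
  have hj0 : d / 3 < m := by omega
  have hk0 : d % 3 = 1 ∨ d % 3 = 2 := by omega
  have hxd : (ζ ^ t) ^ d = 1 := by
    rw [← pow_mul, hζ.pow_eq_one_iff_dvd]
    obtain ⟨t', ht'⟩ := hgt
    exact ⟨t', by rw [ht', hgd]; ring⟩
  apply Finset.prod_eq_zero (Finset.mem_range.2 hj0)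
  rcases hk0 with hk | hk
  · have : 3 * (d / 3) + 1 = d := by omega
    rw [this, hxd, sub_self, zero_mul]
  · have : 3 * (d / 3) + 2 = d := by omega
    rw [this, hxd, sub_self, mul_zero]

/-- Inner computation for the nonvanishing case. -/
lemma borwein_eval_inner (x : ℂ) (e g : ℕ) (he0 : 0 < e) (hx : IsPrimitiveRoot x (3 * e)) :
    ∏ j ∈ range (e * g), ((1 - x ^ (3 * j + 1)) * (1 - x ^ (3 * j + 2))) = (3 : ℂ) ^ g := by
  have hx3e : x ^ (3 * e) = 1 := hx.pow_eq_one
  have hper : ∀ j, (fun j => (1 - x ^ (3 * j + 1)) * (1 - x ^ (3 * j + 2))) (j + e)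
      = (fun j => (1 - x ^ (3 * j + 1)) * (1 - x ^ (3 * j + 2))) j := by
    intro j
    have h1 : ∀ k, x ^ (3 * (j + e) + k) = x ^ (3 * j + k) := by
      intro k
      have : 3 * (j + e) + k = (3 * j + k) + 3 * e := by ring
      rw [this, pow_add, hx3e, mul_one]
    simp only [h1]
  rw [prod_range_mul_of_periodic_s3 _ e g hper]
  have hu : IsPrimitiveRoot (x ^ 3) e := hx.pow (by positivity) rfl
  have hsplit : ∏ j ∈ range e, ((1 - x ^ (3 * j + 1)) * (1 - x ^ (3 * j + 2)))
      = (∏ j ∈ range e, (1 - x * (x ^ 3) ^ j)) * ∏ j ∈ range e, (1 - x ^ 2 * (x ^ 3) ^ j) := by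
    rw [← Finset.prod_mul_distrib]
    apply Finset.prod_congr rfl
    intro j _
    have e1 : x ^ (3 * j + 1) = x * (x ^ 3) ^ j := by ring
    have e2 : x ^ (3 * j + 2) = x ^ 2 * (x ^ 3) ^ j := by ring
    rw [e1, e2]
  have hω3 : (x ^ e) ^ 3 = 1 := by rw [← pow_mul, mul_comm, hx3e]
  have hω1 : x ^ e ≠ 1 := by
    intro h
    have := Nat.le_of_dvd he0 ((hx.pow_eq_one_iff_dvd e).1 h)
    omega
  have quad : (x ^ e) ^ 2 + x ^ e + 1 = 0 := by
    have h0 : (x ^ e - 1) * ((x ^ e) ^ 2 + x ^ e + 1) = 0 := by linear_combination hω3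
    rcases mul_eq_zero.1 h0 with h | h
    · exact absurd (sub_eq_zero.1 h) hω1
    · exact h
  rw [hsplit, prod_one_sub_mul_pow he0 hu x, prod_one_sub_mul_pow he0 hu (x ^ 2)]
  have hx2e : (x ^ 2) ^ e = (x ^ e) ^ 2 := by ring
  rw [hx2e]
  have : (1 - x ^ e) * (1 - (x ^ e) ^ 2) = 3 := by linear_combination hω3 - quad
  rw [this]

lemma borwein_eval_pos {ζ : ℂ} {m N t : ℕ} (hm : 0 < m) (hN : N = 3 * m)
    (hζ : IsPrimitiveRoot ζ N) (hd : Nat.gcd t N ∣ m) :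
    ∏ j ∈ range m, ((1 - (ζ ^ t) ^ (3 * j + 1)) * (1 - (ζ ^ t) ^ (3 * j + 2)))
      = (3 : ℂ) ^ Nat.gcd t N := by
  obtain ⟨g, hgdef⟩ : ∃ g, Nat.gcd t N = g := ⟨_, rfl⟩
  rw [hgdef] at hd ⊢
  have hN0 : 0 < N := by omega
  have hg0 : 0 < g := hgdef ▸ Nat.gcd_pos_of_pos_right t hN0
  obtain ⟨e, he⟩ := hd
  have he0 : 0 < e := Nat.pos_of_ne_zero (by rintro rfl; omega)
  have hx : IsPrimitiveRoot (ζ ^ t) (3 * e) := by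
    have h1 : IsPrimitiveRoot (ζ ^ g) (N / g) :=
      hζ.pow hN0 (hgdef ▸ (Nat.mul_div_cancel' (Nat.gcd_dvd_right t N)).symm)
    have h2 : N / g = 3 * e := by
      have hNe : N = 3 * e * g := by rw [hN, he]; ring
      rw [hNe, Nat.mul_div_cancel _ hg0]
    rw [h2] at h1
    have h3 : (t / g).Coprime (3 * e) := by
      have h4 := Nat.coprime_div_gcd_div_gcd (m := t) (n := N) (hgdef ▸ hg0)
      rwa [hgdef, h2] at h4
    have h5 := h1.pow_of_coprime (t / g) h3
    rwa [← pow_mul, Nat.mul_div_cancel' (hgdef ▸ Nat.gcd_dvd_left t N)] at h5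
  have hm' : m = e * g := by rw [he, mul_comm]
  rw [hm']
  exact borwein_eval_inner (ζ ^ t) e g he0 hx



lemma card_multiples3 (k : ℕ) : ((range (3 * k)).filter (fun u => 3 ∣ u)).card = k := by
  have him : (range (3 * k)).filter (fun u => 3 ∣ u) = (range k).image (fun v => 3 * v) := by
    ext u
    simp only [mem_filter, mem_range, Finset.mem_image]
    constructor
    · rintro ⟨hu, v, rfl⟩
      exact ⟨v, by omega, by omega⟩
    · rintro ⟨v, hv, rfl⟩
      exact ⟨by omega, v, rfl⟩
  rw [him, Finset.card_image_of_injective _ (fun a b h => by omega), Finset.card_range]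

lemma totient_three_mul_le (k : ℕ) (hk : 0 < k) : Nat.totient (3 * k) ≤ 2 * k := by
  rw [Nat.totient_eq_card_coprime]
  have hsub : (range (3 * k)).filter ((3 * k).Coprime) ⊆
      (range (3 * k)).filter (fun u => ¬ 3 ∣ u) := by
    intro u
    simp only [mem_filter, mem_range]
    rintro ⟨h1, h2⟩
    refine ⟨h1, fun h3 => ?_⟩
    have : (3 : ℕ) ∣ Nat.gcd (3 * k) u := Nat.dvd_gcd ⟨k, rfl⟩ h3
    rw [Nat.Coprime] at h2
    omega
  calc ((range (3 * k)).filter ((3 * k).Coprime)).card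
      ≤ ((range (3 * k)).filter (fun u => ¬ 3 ∣ u)).card := Finset.card_le_card hsub
    _ = 2 * k := by
        have := Finset.card_filter_add_card_filter_not
          (s := range (3 * k)) (p := fun u => 3 ∣ u)
        rw [card_multiples3] at this
        rw [Finset.card_range] at this
        omega

lemma card_gcd_fiber (N g : ℕ) (hN : 0 < N) (hg : g ∣ N) (hg0 : 0 < g) :
    ((range N).filter (fun t => Nat.gcd t N = g)).card ≤ Nat.totient (N / g) := by
  rw [Nat.totient_eq_card_coprime]
  apply Finset.card_le_card_of_injOn (fun t => t / g)
  · intro t ht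
    simp only [Finset.mem_coe, mem_filter, mem_range] at ht ⊢
    obtain ⟨htN, hgcd⟩ := ht
    have hgt : g ∣ t := hgcd ▸ Nat.gcd_dvd_left t N
    constructor
    · exact Nat.div_lt_div_of_lt_of_dvd hg htN
    · have := Nat.coprime_div_gcd_div_gcd (m := t) (n := N) (hgcd ▸ hg0)
      rw [hgcd] at this
      exact (Nat.coprime_comm.1 this)
  · intro t1 h1 t2 h2 h12
    simp only [Finset.coe_filter, Set.mem_setOf_eq, mem_range] at h1 h2
    have hgt1 : g ∣ t1 := h1.2 ▸ Nat.gcd_dvd_left t1 N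
    have hgt2 : g ∣ t2 := h2.2 ▸ Nat.gcd_dvd_left t2 N
    obtain ⟨c1, rfl⟩ := hgt1
    obtain ⟨c2, rfl⟩ := hgt2
    simp only [Nat.mul_div_cancel_left _ hg0] at h12
    rw [h12]

lemma geom3 (K : ℕ) : 2 * (∑ g ∈ Icc 1 K, 3 ^ g) + 3 = 3 ^ (K + 1) := by
  induction K with
  | zero => simp
  | succ K ih =>
    rw [Finset.sum_Icc_succ_top (by omega), mul_add, pow_succ]
    omega

lemma m_lt_pow (m : ℕ) (hm : 5 ≤ m) : m < 3 ^ ((m - 1) / 2) := by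
  induction m using Nat.strong_induction_on with
  | _ m ih =>
    rcases Nat.lt_or_ge m 7 with h | h
    · interval_cases m <;> norm_num
    · have h2 := ih (m - 2) (by omega) (by omega)
      have he : (m - 1) / 2 = (m - 2 - 1) / 2 + 1 := by omega
      rw [he, pow_succ]
      omega

lemma numeric_bound (m : ℕ) (hm : 2 ≤ m) :
    ∑ g ∈ m.properDivisors, Nat.totient (3 * (m / g)) * 3 ^ g < 3 ^ m := by
  rcases Nat.lt_or_ge m 5 with h | h
  · interval_cases m <;> decide
  · have hle : ∀ g ∈ m.properDivisors, Nat.totient (3 * (m / g)) * 3 ^ g ≤ 2 * m * 3 ^ g := by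
      intro g hg
      rw [Nat.mem_properDivisors] at hg
      obtain ⟨⟨c, rfl⟩, hlt⟩ := hg
      have hg0 : 0 < g := Nat.pos_of_ne_zero (by rintro rfl; omega)
      have hc0 : 0 < c := Nat.pos_of_ne_zero (by rintro rfl; omega)
      rw [Nat.mul_div_cancel_left _ hg0]
      calc Nat.totient (3 * c) * 3 ^ g ≤ (2 * c) * 3 ^ g :=
            Nat.mul_le_mul_right _ (totient_three_mul_le c hc0)
        _ ≤ 2 * (g * c) * 3 ^ g := by
            apply Nat.mul_le_mul_right
            have : c ≤ g * c := Nat.le_mul_of_pos_left c hg0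
            omega
    have hsub : m.properDivisors ⊆ Icc 1 (m / 2) := by
      intro g hg
      rw [Nat.mem_properDivisors] at hg
      obtain ⟨⟨c, rfl⟩, hlt⟩ := hg
      have hg0 : 0 < g := Nat.pos_of_ne_zero (by rintro rfl; omega)
      have hc2 : 2 ≤ c := by
        rcases Nat.lt_or_ge c 2 with hc | hc
        · interval_cases c <;> omega
        · exact hc
      rw [Finset.mem_Icc]
      constructor
      · omega
      · rw [Nat.le_div_iff_mul_le (by omega)]
        calc g * 2 ≤ g * c := Nat.mul_le_mul_left g hc2
          _ = g * c := rfl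
    calc ∑ g ∈ m.properDivisors, Nat.totient (3 * (m / g)) * 3 ^ g
        ≤ ∑ g ∈ m.properDivisors, 2 * m * 3 ^ g := Finset.sum_le_sum hle
      _ ≤ ∑ g ∈ Icc 1 (m / 2), 2 * m * 3 ^ g := by
          apply Finset.sum_le_sum_of_subset hsub
      _ = m * (2 * ∑ g ∈ Icc 1 (m / 2), 3 ^ g) := by
          rw [Finset.mul_sum]
          rw [Finset.mul_sum]
          apply Finset.sum_congr rfl
          intro g _
          ring
      _ < 3 ^ m := by
          have hgeom := geom3 (m / 2)
          have hml := m_lt_pow m h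
          have hexp : (m / 2 + 1) + ((m - 1) / 2) = m := by omega
          calc m * (2 * ∑ g ∈ Icc 1 (m / 2), 3 ^ g) ≤ m * 3 ^ (m / 2 + 1) := by
                apply Nat.mul_le_mul_left
                omega
            _ < 3 ^ ((m - 1) / 2) * 3 ^ (m / 2 + 1) :=
                Nat.mul_lt_mul_of_lt_of_le hml (le_refl _) (by positivity)
            _ = 3 ^ m := by rw [← pow_add, add_comm ((m-1)/2), hexp]



/-- Reindexing the lacunary coefficient sum as a filtered sum over all indices. -/
lemma reindex_sum (P : Polynomial ℤ) (N D b : ℕ) (hN0 : 0 < N) (hD : P.natDegree ≤ D)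
    (hb1 : 1 ≤ b) (hbN : b < N) :
    ∑ l ∈ range (D + 1), P.coeff (b + l * N)
      = ∑ i ∈ range (D + 1), (if N ∣ (N - b + i) then P.coeff i else 0) := by
  conv_rhs => rw [← Finset.sum_filter]
  rw [← Finset.sum_filter_of_ne (s := range (D + 1)) (p := fun l => b + l * N ≤ D)
    (f := fun l => P.coeff (b + l * N))
    (by
      intro l _ hne
      by_contra hgt
      exact hne (P.coeff_eq_zero_of_natDegree_lt (by omega)))]
  apply Finset.sum_nbij' (fun l => b + l * N) (fun i => (i - b) / N)
  · intro l hl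
    simp only [mem_filter, mem_range] at hl ⊢
    refine ⟨by omega, ?_⟩
    have hexp : N * (l + 1) = l * N + N := by ring
    exact ⟨l + 1, by omega⟩
  · intro i hi
    simp only [mem_filter, mem_range] at hi ⊢
    obtain ⟨hiD, k, hk⟩ := hi
    have hk1 : 1 ≤ k := by
      rcases Nat.eq_zero_or_pos k with rfl | h
      · simp at hk; omega
      · exact h
    obtain ⟨l, rfl⟩ : ∃ l, k = l + 1 := ⟨k - 1, by omega⟩
    have hexp : N * (l + 1) = N * l + N := by ring
    have hi' : i = b + N * l := by omega
    have hnl : l ≤ N * l := Nat.le_mul_of_pos_left l hN0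
    have hdiv : (i - b) / N = l := by
      have h1 : i - b = N * l := by omega
      rw [h1, Nat.mul_div_cancel_left _ hN0]
    rw [hdiv]
    refine ⟨by omega, by rw [mul_comm]; omega⟩
  · intro l hl
    have h1 : b + l * N - b = l * N := by omega
    rw [h1, Nat.mul_div_cancel _ hN0]
  · intro i hi
    simp only [mem_filter, mem_range] at hi
    obtain ⟨hiD, k, hk⟩ := hi
    have hk1 : 1 ≤ k := by
      rcases Nat.eq_zero_or_pos k with rfl | h
      · simp at hk; omega
      · exact h
    obtain ⟨l, rfl⟩ : ∃ l, k = l + 1 := ⟨k - 1, by omega⟩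
    have hexp : N * (l + 1) = N * l + N := by ring
    have hi' : i = b + N * l := by omega
    have hdiv : (i - b) / N = l := by
      have h1 : i - b = N * l := by omega
      rw [h1, Nat.mul_div_cancel_left _ hN0]
    rw [hdiv, mul_comm]
    omega
  · intro l _
    rfl

/-- The Fourier-inversion identity. -/
lemma fourier_identity (P : Polynomial ℤ) (N D b : ℕ) {ζ : ℂ} (hζ : IsPrimitiveRoot ζ N)
    (hN0 : 0 < N) (hD : P.natDegree ≤ D) (hb1 : 1 ≤ b) (hbN : b < N) :
    ∑ t ∈ range N, ζ ^ (t * (N - b)) * Polynomial.eval (ζ ^ t) (P.map (Int.castRingHom ℂ))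
      = (N : ℂ) * ((∑ l ∈ range (D + 1), P.coeff (b + l * N) : ℤ) : ℂ) := by
  have hsum : ∀ a : ℕ, ∑ t ∈ range N, ζ ^ (t * a) = if N ∣ a then (N : ℂ) else 0 := by
    intro a
    simp_rw [mul_comm, pow_mul]
    by_cases h : N ∣ a
    · rw [if_pos h, (hζ.pow_eq_one_iff_dvd a).2 h]
      simp
    · rw [if_neg h, geom_sum_eq (fun h1 => h ((hζ.pow_eq_one_iff_dvd a).1 h1)), ← pow_mul,
        mul_comm, pow_mul, hζ.pow_eq_one, one_pow, sub_self, zero_div]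
  have hdeg : (P.map (Int.castRingHom ℂ)).natDegree < D + 1 :=
    lt_of_le_of_lt (le_trans (Polynomial.natDegree_map_le) hD) (by omega)
  calc ∑ t ∈ range N, ζ ^ (t * (N - b)) * Polynomial.eval (ζ ^ t) (P.map (Int.castRingHom ℂ))
      = ∑ t ∈ range N, ∑ i ∈ range (D + 1),
          ((P.coeff i : ℂ)) * ζ ^ (t * (N - b + i)) := by
        apply Finset.sum_congr rfl
        intro t _
        rw [Polynomial.eval_eq_sum_range' hdeg, Finset.mul_sum]
        apply Finset.sum_congr rfl
        intro i _
        rw [Polynomial.coeff_map, Nat.mul_add, pow_add]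
        simp only [eq_intCast]
        ring
    _ = ∑ i ∈ range (D + 1), ((P.coeff i : ℂ)) * ∑ t ∈ range N, ζ ^ (t * (N - b + i)) := by
        rw [Finset.sum_comm]
        apply Finset.sum_congr rfl
        intro i _
        rw [Finset.mul_sum]
    _ = ∑ i ∈ range (D + 1), ((P.coeff i : ℂ)) * (if N ∣ (N - b + i) then (N : ℂ) else 0) := by
        simp_rw [hsum]
    _ = (N : ℂ) * ∑ i ∈ range (D + 1), (if N ∣ (N - b + i) then (P.coeff i : ℂ) else 0) := by
        rw [Finset.mul_sum]
        apply Finset.sum_congr rfl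
        intro i _
        split_ifs <;> ring
    _ = (N : ℂ) * ((∑ l ∈ range (D + 1), P.coeff (b + l * N) : ℤ) : ℂ) := by
        rw [reindex_sum P N D b hN0 hD hb1 hbN]
        push_cast
        rfl

lemma borwein_natDegree_le (n : ℕ) : (borweinPoly 3 1 n).natDegree ≤ 3 * (n + 1) ^ 2 := by
  unfold borweinPoly
  calc (∏ j ∈ range (n + 1), ∏ k ∈ Finset.Icc 1 (3 - 1), (1 - (Polynomial.X : ℤ[X]) ^ (3 * j + k)) ^ 1).natDegree
      ≤ ∑ j ∈ range (n + 1), (∏ k ∈ Finset.Icc 1 (3 - 1), (1 - (Polynomial.X : ℤ[X]) ^ (3 * j + k)) ^ 1).natDegree :=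
        Polynomial.natDegree_prod_le _ _
    _ ≤ ∑ j ∈ range (n + 1), (6 * j + 3) := by
        apply Finset.sum_le_sum
        intro j _
        calc (∏ k ∈ Finset.Icc 1 (3 - 1), (1 - (Polynomial.X : ℤ[X]) ^ (3 * j + k)) ^ 1).natDegree
            ≤ ∑ k ∈ Finset.Icc 1 (3 - 1), ((1 - (Polynomial.X : ℤ[X]) ^ (3 * j + k)) ^ 1).natDegree :=
              Polynomial.natDegree_prod_le _ _
          _ ≤ ∑ k ∈ Finset.Icc 1 (3 - 1), (3 * j + k) := by
              apply Finset.sum_le_sum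
              intro k _
              rw [pow_one]
              refine le_trans (Polynomial.natDegree_sub_le _ _) ?_
              simp [Polynomial.natDegree_X_pow]
          _ = 6 * j + 3 := by
              rw [show (Finset.Icc 1 (3 - 1) : Finset ℕ) = {1, 2} from rfl,
                Finset.sum_insert (by decide), Finset.sum_singleton]
              ring
    _ = 3 * (n + 1) ^ 2 := by
        induction n with
        | zero => simp
        | succ k ih => rw [Finset.sum_range_succ, ih]; ring
  done

lemma eval_map_borwein (n : ℕ) (x : ℂ) :
    Polynomial.eval x ((borweinPoly 3 1 n).map (Int.castRingHom ℂ))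
      = ∏ j ∈ range (n + 1), ((1 - x ^ (3 * j + 1)) * (1 - x ^ (3 * j + 2))) := by
  unfold borweinPoly
  rw [Polynomial.map_prod, Polynomial.eval_prod]
  apply Finset.prod_congr rfl
  intro j _
  rw [show (Finset.Icc 1 (3 - 1) : Finset ℕ) = {1, 2} from rfl]
  rw [Finset.prod_insert (by decide), Finset.prod_singleton]
  simp [Polynomial.eval_mul, Polynomial.eval_sub, Polynomial.eval_pow]

end Helpers

theorem stmt_3 (n b : ℕ) (hn : 1 ≤ n) (hb : b < 3 * (n + 1))
    (hbmod : b % 3 = 1 ∨ b % 3 = 2) :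
    borweinM 3 1 n b < 0 := by
  have hm1 : 0 < n + 1 := by omega
  have hN0 : 0 < 3 * (n + 1) := by omega
  have hb1 : 1 ≤ b := by omega
  have hb3 : ¬ 3 ∣ b := by omega
  obtain ⟨ζ, hζ⟩ : ∃ ζ : ℂ, IsPrimitiveRoot ζ (3 * (n + 1)) :=
    ⟨_, Complex.isPrimitiveRoot_exp _ (by omega)⟩
  have hDdeg : borweinDeg 3 1 n = 3 * (n + 1) ^ 2 := by
    unfold borweinDeg
    generalize (n + 1) ^ 2 = A
    omega
  have hM : borweinM 3 1 n b
      = ∑ l ∈ range (3 * (n + 1) ^ 2 + 1), (borweinPoly 3 1 n).coeff (b + l * (3 * (n + 1))) := by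
    rw [borweinM, hDdeg]
    rfl
  -- the evaluation of the polynomial at powers of ζ
  have heval : ∀ t : ℕ, Polynomial.eval (ζ ^ t) ((borweinPoly 3 1 n).map (Int.castRingHom ℂ))
      = if Nat.gcd t (3 * (n + 1)) ∣ (n + 1) then (3 : ℂ) ^ Nat.gcd t (3 * (n + 1)) else 0 := by
    intro t
    rw [eval_map_borwein n (ζ ^ t)]
    split_ifs with h
    · exact borwein_eval_pos hm1 rfl hζ h
    · exact borwein_eval_zero hm1 rfl hζ h
  -- Fourier identity
  have hkey := fourier_identity (borweinPoly 3 1 n) (3 * (n + 1)) (3 * (n + 1) ^ 2) b hζ hN0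
    (borwein_natDegree_le n) hb1 hb
  rw [← hM] at hkey
  -- split off the two main terms t = n+1 and t = 2(n+1)
  have hmem1 : (n + 1) ∈ range (3 * (n + 1)) := Finset.mem_range.2 (by omega)
  have hmem2 : 2 * (n + 1) ∈ (range (3 * (n + 1))).erase (n + 1) := by
    simp only [Finset.mem_erase, mem_range]
    omega
  set F : ℕ → ℂ := fun t =>
    ζ ^ (t * (3 * (n + 1) - b)) * Polynomial.eval (ζ ^ t) ((borweinPoly 3 1 n).map (Int.castRingHom ℂ))
    with hFdef
  have hsplit : ∑ t ∈ range (3 * (n + 1)), F t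
      = F (n + 1) + (F (2 * (n + 1))
        + ∑ t ∈ ((range (3 * (n + 1))).erase (n + 1)).erase (2 * (n + 1)), F t) := by
    rw [Finset.add_sum_erase _ F hmem2, Finset.add_sum_erase _ F hmem1]
  -- main terms
  have hg1 : Nat.gcd (n + 1) (3 * (n + 1)) = n + 1 := Nat.gcd_eq_left ⟨3, by ring⟩
  have hg2 : Nat.gcd (2 * (n + 1)) (3 * (n + 1)) = n + 1 := by
    rw [show 2 * (n + 1) = (n + 1) * 2 by ring, show 3 * (n + 1) = (n + 1) * 3 by ring,
      Nat.gcd_mul_left]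
    simp
  have hx3 : (ζ ^ ((n + 1) * (3 * (n + 1) - b))) ^ 3 = 1 := by
    rw [← pow_mul, show (n + 1) * (3 * (n + 1) - b) * 3 = (3 * (n + 1)) * (3 * (n + 1) - b) by ring,
      pow_mul, hζ.pow_eq_one, one_pow]
  have hx1 : (ζ ^ ((n + 1) * (3 * (n + 1) - b))) ≠ 1 := by
    intro h
    obtain ⟨c, hc⟩ := (hζ.pow_eq_one_iff_dvd _).1 h
    have hc' : (n + 1) * (3 * (n + 1) - b) = (n + 1) * (3 * c) := by rw [hc]; ring
    have := Nat.eq_of_mul_eq_mul_left hm1 hc'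
    omega
  have quadx : (ζ ^ ((n + 1) * (3 * (n + 1) - b))) ^ 2 + ζ ^ ((n + 1) * (3 * (n + 1) - b)) + 1 = 0 := by
    have h0 : (ζ ^ ((n + 1) * (3 * (n + 1) - b)) - 1)
        * ((ζ ^ ((n + 1) * (3 * (n + 1) - b))) ^ 2 + ζ ^ ((n + 1) * (3 * (n + 1) - b)) + 1) = 0 := by
      linear_combination hx3
    rcases mul_eq_zero.1 h0 with h | h
    · exact absurd (sub_eq_zero.1 h) hx1
    · exact h
  have hF1 : F (n + 1) = ζ ^ ((n + 1) * (3 * (n + 1) - b)) * (3 : ℂ) ^ (n + 1) := by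
    rw [hFdef]
    simp only
    rw [heval, hg1, if_pos (dvd_refl _)]
  have hF2 : F (2 * (n + 1)) = (ζ ^ ((n + 1) * (3 * (n + 1) - b))) ^ 2 * (3 : ℂ) ^ (n + 1) := by
    rw [hFdef]
    simp only
    rw [heval, hg2, if_pos (dvd_refl _), ← pow_mul,
      show (n + 1) * (3 * (n + 1) - b) * 2 = 2 * (n + 1) * (3 * (n + 1) - b) by ring]
  have hmain : F (n + 1) + F (2 * (n + 1)) = -(3 : ℂ) ^ (n + 1) := by
    rw [hF1, hF2]
    linear_combination (3 : ℂ) ^ (n + 1) * quadx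
  -- error term bound
  have hζnorm : ‖ζ‖ = 1 := by
    exact norm_eq_one_of_pow_eq_one hζ.pow_eq_one (by omega)
  have habsf : ∀ t ∈ ((range (3 * (n + 1))).erase (n + 1)).erase (2 * (n + 1)),
      ‖F t‖ ≤ (if Nat.gcd t (3 * (n + 1)) ∣ (n + 1)
        then (3 : ℝ) ^ Nat.gcd t (3 * (n + 1)) else 0) := by
    intro t _
    rw [hFdef]
    simp only
    rw [norm_mul, norm_pow, hζnorm, one_pow, one_mul, heval]
    split_ifs with h
    · rw [norm_pow]
      norm_num
    · simp
  have herr : ‖∑ t ∈ ((range (3 * (n + 1))).erase (n + 1)).erase (2 * (n + 1)), F t‖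
      < (3 : ℝ) ^ (n + 1) := by
    have h1 := norm_sum_le (((range (3 * (n + 1))).erase (n + 1)).erase (2 * (n + 1))) F
    have h2 := Finset.sum_le_sum habsf
    -- rewrite the ite-sum as a filtered sum
    rw [← Finset.sum_filter (fun t => Nat.gcd t (3 * (n + 1)) ∣ (n + 1))
      (fun t => (3 : ℝ) ^ Nat.gcd t (3 * (n + 1)))] at h2
    -- fiberwise bound
    have hmaps : ∀ t ∈ (((range (3 * (n + 1))).erase (n + 1)).erase (2 * (n + 1))).filter
        (fun t => Nat.gcd t (3 * (n + 1)) ∣ (n + 1)),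
        Nat.gcd t (3 * (n + 1)) ∈ (n + 1).properDivisors := by
      intro t ht
      simp only [Finset.mem_filter, Finset.mem_erase, mem_range] at ht
      obtain ⟨⟨ht2, ht1, htN⟩, hdvd⟩ := ht
      rw [Nat.mem_properDivisors]
      refine ⟨hdvd, lt_of_le_of_ne (Nat.le_of_dvd hm1 hdvd) ?_⟩
      intro hEq
      obtain ⟨c, rfl⟩ : (n + 1) ∣ t := hEq ▸ Nat.gcd_dvd_left t (3 * (n + 1))
      have hc3 : c < 3 := by
        by_contra hc
        push_neg at hc
        have : 3 * (n + 1) ≤ (n + 1) * c := by nlinarith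
        omega
      interval_cases c
      · rw [Nat.mul_zero] at hEq ht1 ht2
        rw [Nat.gcd_comm, Nat.gcd_zero_right] at hEq
        omega
      · omega
      · omega
    have h3 := (Finset.sum_fiberwise_of_maps_to hmaps
      (fun t => (3 : ℝ) ^ Nat.gcd t (3 * (n + 1)))).symm
    have h4 : ∀ g ∈ (n + 1).properDivisors,
        ∑ t ∈ ((((range (3 * (n + 1))).erase (n + 1)).erase (2 * (n + 1))).filter
          (fun t => Nat.gcd t (3 * (n + 1)) ∣ (n + 1))).filter
            (fun t => Nat.gcd t (3 * (n + 1)) = g),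
          (3 : ℝ) ^ Nat.gcd t (3 * (n + 1))
        ≤ (Nat.totient (3 * ((n + 1) / g)) : ℝ) * 3 ^ g := by
      intro g hg
      rw [Nat.mem_properDivisors] at hg
      obtain ⟨hgdvd, hglt⟩ := hg
      have hg0 : 0 < g := Nat.pos_of_ne_zero (by rintro rfl; omega)
      have hsum_const : ∑ t ∈ ((((range (3 * (n + 1))).erase (n + 1)).erase (2 * (n + 1))).filter
          (fun t => Nat.gcd t (3 * (n + 1)) ∣ (n + 1))).filter
            (fun t => Nat.gcd t (3 * (n + 1)) = g),
          (3 : ℝ) ^ Nat.gcd t (3 * (n + 1))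
          = (((((range (3 * (n + 1))).erase (n + 1)).erase (2 * (n + 1))).filter
          (fun t => Nat.gcd t (3 * (n + 1)) ∣ (n + 1))).filter
            (fun t => Nat.gcd t (3 * (n + 1)) = g)).card * (3 : ℝ) ^ g := by
        rw [Finset.sum_congr rfl (fun t ht => by
          simp only [Finset.mem_filter] at ht
          rw [ht.2])]
        rw [Finset.sum_const, nsmul_eq_mul]
      rw [hsum_const]
      apply mul_le_mul_of_nonneg_right _ (by positivity)
      have hsubset : ((((range (3 * (n + 1))).erase (n + 1)).erase (2 * (n + 1))).filter
          (fun t => Nat.gcd t (3 * (n + 1)) ∣ (n + 1))).filter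
            (fun t => Nat.gcd t (3 * (n + 1)) = g)
          ⊆ (range (3 * (n + 1))).filter (fun t => Nat.gcd t (3 * (n + 1)) = g) := by
        intro t ht
        simp only [Finset.mem_filter, Finset.mem_erase, mem_range] at ht ⊢
        exact ⟨ht.1.1.2.2, ht.2⟩
      have hcard := le_trans (Finset.card_le_card hsubset)
        (card_gcd_fiber (3 * (n + 1)) g hN0 (dvd_mul_of_dvd_right hgdvd 3) hg0)
      rw [Nat.mul_div_assoc 3 hgdvd] at hcard
      exact_mod_cast hcard
    have h5 := Finset.sum_le_sum h4
    rw [h3] at h2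
    have h6 : ∑ g ∈ (n + 1).properDivisors, (Nat.totient (3 * ((n + 1) / g)) : ℝ) * 3 ^ g
        < (3 : ℝ) ^ (n + 1) := by
      have := numeric_bound (n + 1) (by omega)
      have hcast : ((∑ g ∈ (n + 1).properDivisors, Nat.totient (3 * ((n + 1) / g)) * 3 ^ g : ℕ) : ℝ)
          < ((3 ^ (n + 1) : ℕ) : ℝ) := by exact_mod_cast this
      push_cast at hcast
      convert hcast using 2
    calc ‖∑ t ∈ ((range (3 * (n + 1))).erase (n + 1)).erase (2 * (n + 1)), F t‖
        ≤ ∑ t ∈ ((range (3 * (n + 1))).erase (n + 1)).erase (2 * (n + 1)), ‖F t‖ := h1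
      _ ≤ _ := h2
      _ ≤ _ := h5
      _ < _ := h6
  -- put everything together
  have hE : ∑ t ∈ ((range (3 * (n + 1))).erase (n + 1)).erase (2 * (n + 1)), F t
      = ((3 * (n + 1) : ℕ) : ℂ) * (borweinM 3 1 n b : ℂ) + (3 : ℂ) ^ (n + 1) := by
    have h := hsplit
    rw [hkey] at h
    linear_combination -hmain - h
  rw [hE] at herr
  have hZ : ((3 * (n + 1) : ℕ) : ℂ) * (borweinM 3 1 n b : ℂ) + (3 : ℂ) ^ (n + 1)
      = (((3 * (n + 1) : ℤ) * borweinM 3 1 n b + 3 ^ (n + 1) : ℤ) : ℂ) := by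
    push_cast
    ring
  rw [hZ, Complex.norm_intCast, ← Int.cast_abs] at herr
  have hint : |(3 * (n + 1) : ℤ) * borweinM 3 1 n b + 3 ^ (n + 1)| < 3 ^ (n + 1) := by
    exact_mod_cast herr
  have hlt := (abs_lt.1 hint).2
  by_contra hcon
  push_neg at hcon
  have hnn : (0 : ℤ) ≤ (3 * (n + 1) : ℤ) * borweinM 3 1 n b :=
    mul_nonneg (by positivity) hcon
  linarith
end

section
/- For p = 3, s = 2: for every integer n ≥ 1 and every integer b with 0 ≤ b < 3(n+1) and 3 | b, one has M_{3,2,n}(b) > 0. -/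
open Polynomial Finset

/-- If `x` is a primitive `d`-th root of unity, `∏_{r=1}^{d-1} (1 - x^r) = d`. -/
lemma aux_prod_one_sub {d : ℕ} {x : ℂ} (hd : 0 < d) (hx : IsPrimitiveRoot x d) :
    ∏ r ∈ Finset.Ico 1 d, (1 - x ^ r) = (d : ℂ) := by
  obtain ⟨e, rfl⟩ : ∃ e, d = e + 1 := ⟨d - 1, by omega⟩
  have h := hx.prod_one_sub_pow_eq_order
  rw [Finset.prod_Ico_eq_prod_range]
  simp only [Nat.add_sub_cancel]
  calc ∏ i ∈ range e, (1 - x ^ (1 + i)) = ∏ i ∈ range e, (1 - x ^ (i + 1)) := by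
        simp_rw [add_comm]
    _ = (e : ℂ) + 1 := h
    _ = ((e + 1 : ℕ) : ℂ) := by push_cast; ring

/-- If `x` is a primitive `d`-th root of unity and `3 ∣ d`, then
`∏_{r < d, 3 ∤ r} (1 - x^r) = 3`. -/
lemma aux_prod_nondiv {d : ℕ} {x : ℂ} (h3 : 3 ∣ d) (hd : 0 < d) (hx : IsPrimitiveRoot x d) :
    ∏ r ∈ (Finset.range d).filter (fun r => ¬ 3 ∣ r), (1 - x ^ r) = 3 := by
  obtain ⟨e, rfl⟩ := h3
  have he : 0 < e := by omega
  have hx3 : IsPrimitiveRoot (x ^ 3) e := hx.pow hd rfl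
  have hB : ∏ r ∈ (Finset.Ico 1 (3 * e)).filter (fun r => 3 ∣ r), (1 - x ^ r) = (e : ℂ) := by
    rw [← aux_prod_one_sub he hx3]
    refine Finset.prod_nbij' (fun r => r / 3) (fun t => 3 * t) ?_ ?_ ?_ ?_ ?_
    · intro r hr
      simp only [Finset.mem_filter, Finset.mem_Ico] at hr ⊢
      omega
    · intro t ht
      simp only [Finset.mem_filter, Finset.mem_Ico] at ht ⊢
      omega
    · intro r hr
      simp only [Finset.mem_filter, Finset.mem_Ico] at hr
      show 3 * (r / 3) = r
      omega
    · intro t ht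
      show 3 * t / 3 = t
      omega
    · intro r hr
      simp only [Finset.mem_filter, Finset.mem_Ico] at hr
      obtain ⟨t, rfl⟩ := hr.2
      show 1 - x ^ (3 * t) = 1 - (x ^ 3) ^ (3 * t / 3)
      rw [Nat.mul_div_cancel_left _ (by norm_num : 0 < 3), ← pow_mul]
  have hA : ∏ r ∈ Finset.Ico 1 (3 * e), (1 - x ^ r) = ((3 * e : ℕ) : ℂ) :=
    aux_prod_one_sub hd hx
  have hsplit := Finset.prod_filter_mul_prod_filter_not (Finset.Ico 1 (3 * e))
    (fun r => 3 ∣ r) (fun r => (1 - x ^ r))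
  have hset : (Finset.Ico 1 (3 * e)).filter (fun r => ¬ 3 ∣ r)
      = (Finset.range (3 * e)).filter (fun r => ¬ 3 ∣ r) := by
    ext r
    simp only [Finset.mem_filter, Finset.mem_Ico, Finset.mem_range]
    omega
  rw [hset, hB, hA] at hsplit
  have heC : (e : ℂ) ≠ 0 := Nat.cast_ne_zero.mpr he.ne'
  have : (e : ℂ) * ∏ r ∈ (Finset.range (3 * e)).filter (fun r => ¬ 3 ∣ r), (1 - x ^ r)
      = (e : ℂ) * 3 := by
    rw [hsplit]; push_cast; ring
  exact mul_left_cancel₀ heC this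
/-- Evaluation of (the complexification of) `T_{3,2,n}` as a product over
all exponents `a < 3(n+1)` with `3 ∤ a`. -/
lemma aux_eval_borwein (n : ℕ) (x : ℂ) :
    Polynomial.eval x ((borweinPoly 3 2 n).map (Int.castRingHom ℂ)) =
      ∏ a ∈ (Finset.range (3 * (n + 1))).filter (fun a => ¬ 3 ∣ a), (1 - x ^ a) ^ 2 := by
  unfold borweinPoly
  rw [Polynomial.map_prod, eval_prod]
  simp only [Polynomial.map_prod, Polynomial.map_pow, Polynomial.map_sub, Polynomial.map_one,
    Polynomial.map_X, eval_prod, eval_pow, eval_sub, eval_one, eval_X]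
  rw [← Finset.prod_product']
  refine Finset.prod_nbij' (fun jk => 3 * jk.1 + jk.2) (fun a => (a / 3, a % 3)) ?_ ?_ ?_ ?_ ?_
  · intro jk hjk
    simp only [Finset.mem_product, Finset.mem_range, Finset.mem_Icc, Finset.mem_filter] at hjk ⊢
    omega
  · intro a ha
    simp only [Finset.mem_product, Finset.mem_range, Finset.mem_Icc, Finset.mem_filter] at ha ⊢
    omega
  · intro jk hjk
    simp only [Finset.mem_product, Finset.mem_range, Finset.mem_Icc] at hjk
    show ((3 * jk.1 + jk.2) / 3, (3 * jk.1 + jk.2) % 3) = jk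
    have h1 : (3 * jk.1 + jk.2) / 3 = jk.1 := by omega
    have h2 : (3 * jk.1 + jk.2) % 3 = jk.2 := by omega
    rw [h1, h2]
  · intro a ha
    simp only [Finset.mem_filter, Finset.mem_range] at ha
    show 3 * (a / 3) + a % 3 = a
    omega
  · intro jk hjk
    rfl
/-- If `x` has order `d` with `3 ∤ d`, the product vanishes. -/
lemma aux_root_zero {N d : ℕ} {x : ℂ} (hN3 : 3 ∣ N) (hx : IsPrimitiveRoot x d)
    (hdN : d ∣ N) (h3 : ¬ 3 ∣ d) (hN : 0 < N) :
    ∏ a ∈ (Finset.range N).filter (fun a => ¬ 3 ∣ a), (1 - x ^ a) ^ 2 = 0 := by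
  have hd0 : 0 < d := Nat.pos_of_dvd_of_pos hdN hN
  apply Finset.prod_eq_zero (i := d)
  · simp only [Finset.mem_filter, Finset.mem_range]
    refine ⟨lt_of_le_of_ne (Nat.le_of_dvd hN hdN) ?_, h3⟩
    rintro rfl; exact h3 hN3
  · rw [hx.pow_eq_one]; ring

/-- If `x` has order `d` with `3 ∣ d` and `d ∣ N`, the product equals `3^(2(N/d))`. -/
lemma aux_root_val {N d : ℕ} {x : ℂ} (hx : IsPrimitiveRoot x d)
    (hdN : d ∣ N) (h3 : 3 ∣ d) (hN : 0 < N) :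
    ∏ a ∈ (Finset.range N).filter (fun a => ¬ 3 ∣ a), (1 - x ^ a) ^ 2
      = (3 : ℂ) ^ (2 * (N / d)) := by
  have hd0 : 0 < d := Nat.pos_of_dvd_of_pos hdN hN
  have hxd : x ^ d = 1 := hx.pow_eq_one
  have hdd : d * (N / d) = N := Nat.mul_div_cancel' hdN
  rw [Finset.prod_pow]
  have key : ∏ a ∈ (Finset.range N).filter (fun a => ¬ 3 ∣ a), (1 - x ^ a)
      = (3 : ℂ) ^ (N / d) := by
    have step : ∀ a : ℕ, (1 : ℂ) - x ^ a = 1 - x ^ (a % d) := by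
      intro a
      conv_lhs => rw [← Nat.div_add_mod a d]
      rw [pow_add, pow_mul, hxd, one_pow, one_mul]
    calc ∏ a ∈ (Finset.range N).filter (fun a => ¬ 3 ∣ a), (1 - x ^ a)
        = ∏ a ∈ (Finset.range N).filter (fun a => ¬ 3 ∣ a), (1 - x ^ (a % d)) :=
          Finset.prod_congr rfl fun a _ => step a
      _ = ∏ rt ∈ ((Finset.range d).filter (fun r => ¬ 3 ∣ r)) ×ˢ Finset.range (N / d),
            (1 - x ^ rt.1) := by
          refine Finset.prod_nbij' (fun a => (a % d, a / d)) (fun rt => rt.1 + d * rt.2)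
            ?_ ?_ ?_ ?_ ?_
          · intro a ha
            simp only [Finset.mem_filter, Finset.mem_range, Finset.mem_product] at ha ⊢
            refine ⟨⟨Nat.mod_lt _ hd0, ?_⟩, Nat.div_lt_div_of_lt_of_dvd hdN ha.1⟩
            intro hmod
            apply ha.2
            conv_rhs => rw [← Nat.div_add_mod a d]
            exact Nat.dvd_add (h3.mul_right _) hmod
          · intro rt hrt
            simp only [Finset.mem_filter, Finset.mem_range, Finset.mem_product] at hrt ⊢
            constructor
            · calc rt.1 + d * rt.2 < d + d * rt.2 := by omega
                _ = d * (rt.2 + 1) := by ring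
                _ ≤ d * (N / d) := Nat.mul_le_mul_left d (by omega)
                _ = N := hdd
            · intro hdvd
              exact hrt.1.2 ((Nat.dvd_add_iff_left (h3.mul_right rt.2)).mpr hdvd)
          · intro a ha
            exact Nat.mod_add_div a d
          · intro rt hrt
            simp only [Finset.mem_filter, Finset.mem_range, Finset.mem_product] at hrt
            show ((rt.1 + d * rt.2) % d, (rt.1 + d * rt.2) / d) = rt
            have h1 : (rt.1 + d * rt.2) % d = rt.1 := by
              rw [Nat.add_mul_mod_self_left, Nat.mod_eq_of_lt hrt.1.1]
            have h2 : (rt.1 + d * rt.2) / d = rt.2 := by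
              rw [Nat.add_mul_div_left _ _ hd0, Nat.div_eq_of_lt hrt.1.1, Nat.zero_add]
            rw [h1, h2]
          · intro a ha; rfl
      _ = ∏ r ∈ (Finset.range d).filter (fun r => ¬ 3 ∣ r), (1 - x ^ r) ^ (N / d) := by
          rw [Finset.prod_product]
          exact Finset.prod_congr rfl fun r _ => by
            show ∏ _y ∈ Finset.range (N / d), (1 - x ^ r) = (1 - x ^ r) ^ (N / d)
            rw [Finset.prod_const, Finset.card_range]
      _ = (3 : ℂ) ^ (N / d) := by
          rw [Finset.prod_pow, aux_prod_nondiv h3 hd0 hx]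
  rw [key, ← pow_mul, mul_comm]
lemma aux_deg_eq (n : ℕ) : borweinDeg 3 2 n = 6 * (n + 1) ^ 2 := by
  unfold borweinDeg
  generalize (n + 1) ^ 2 = t
  omega

lemma aux_natDegree_le (n : ℕ) : (borweinPoly 3 2 n).natDegree ≤ borweinDeg 3 2 n := by
  rw [aux_deg_eq]
  unfold borweinPoly
  refine le_trans (Polynomial.natDegree_prod_le _ _) ?_
  refine le_trans (Finset.sum_le_sum (fun j _ => Polynomial.natDegree_prod_le
    (Finset.Icc 1 (3 - 1)) (fun k => (1 - Polynomial.X ^ (3 * j + k)) ^ 2))) ?_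
  have hfac : ∀ j k : ℕ, ((1 - (Polynomial.X : Polynomial ℤ) ^ (3 * j + k)) ^ 2).natDegree
      ≤ 2 * (3 * j + k) := by
    intro j k
    refine le_trans (Polynomial.natDegree_pow_le) ?_
    have h1 : ((1 : Polynomial ℤ) - Polynomial.X ^ (3 * j + k)).natDegree ≤ 3 * j + k := by
      refine le_trans (Polynomial.natDegree_sub_le _ _) ?_
      simp [Polynomial.natDegree_X_pow]
    omega
  refine le_trans (Finset.sum_le_sum (fun j _ => Finset.sum_le_sum
    (fun k _ => hfac j k))) ?_
  have hIcc : (Finset.Icc 1 (3 - 1) : Finset ℕ) = {1, 2} := rfl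
  rw [hIcc]
  have hsum : ∀ j : ℕ, ∑ k ∈ ({1, 2} : Finset ℕ), 2 * (3 * j + k) = 12 * j + 6 := by
    intro j
    rw [Finset.sum_insert (by norm_num), Finset.sum_singleton]
    ring
  rw [Finset.sum_congr rfl fun j _ => hsum j]
  rw [Finset.sum_add_distrib, ← Finset.mul_sum, Finset.sum_const, Finset.card_range,
    smul_eq_mul]
  have h := Finset.sum_range_id_mul_two (n + 1)
  rw [Nat.add_sub_cancel] at h
  generalize hS : (∑ i ∈ Finset.range (n + 1), i) = S at h ⊢
  nlinarith [h]

lemma aux_coeff_zero (n i : ℕ) (hi : borweinDeg 3 2 n < i) : borweinCoeff 3 2 n i = 0 :=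
  Polynomial.coeff_eq_zero_of_natDegree_lt (lt_of_le_of_lt (aux_natDegree_le n) hi)
/-- The roots-of-unity filter identity. -/
lemma aux_filter_sum (n b : ℕ) (hb : b < 3 * (n + 1)) {ζ : ℂ}
    (hζ : IsPrimitiveRoot ζ (3 * (n + 1))) :
    ∑ m ∈ Finset.range (3 * (n + 1)),
        (ζ ^ m) ^ (3 * (n + 1) - b) *
          Polynomial.eval (ζ ^ m) ((borweinPoly 3 2 n).map (Int.castRingHom ℂ))
      = (3 * (n + 1) : ℕ) * (borweinM 3 2 n b : ℂ) := by
  set N : ℕ := 3 * (n + 1) with hN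
  set D : ℕ := borweinDeg 3 2 n with hD
  set c : ℕ := N - b with hc
  have hN0 : 0 < N := by positivity
  have hc0 : 0 < c := by omega
  -- expand the evaluation
  have hdeg : ((borweinPoly 3 2 n).map (Int.castRingHom ℂ)).natDegree < D + 1 :=
    lt_of_le_of_lt (le_trans (Polynomial.natDegree_map_le) (aux_natDegree_le n))
      (Nat.lt_succ_self D)
  have heval : ∀ m : ℕ,
      Polynomial.eval (ζ ^ m) ((borweinPoly 3 2 n).map (Int.castRingHom ℂ))
        = ∑ i ∈ Finset.range (D + 1), (borweinCoeff 3 2 n i : ℂ) * (ζ ^ m) ^ i := by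
    intro m
    rw [Polynomial.eval_eq_sum_range' hdeg]
    refine Finset.sum_congr rfl fun i _ => ?_
    rw [Polynomial.coeff_map]
    rfl
  -- geometric sum
  have geo : ∀ j : ℕ, ∑ m ∈ Finset.range N, (ζ ^ j) ^ m
      = if N ∣ j then (N : ℂ) else 0 := by
    intro j
    by_cases hj : N ∣ j
    · rw [if_pos hj]
      have h1 : ζ ^ j = 1 := (hζ.pow_eq_one_iff_dvd j).mpr hj
      simp [h1]
    · rw [if_neg hj]
      have h1 : ζ ^ j ≠ 1 := fun h => hj ((hζ.pow_eq_one_iff_dvd j).mp h)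
      rw [geom_sum_eq h1]
      have h2 : (ζ ^ j) ^ N = 1 := by
        rw [← pow_mul, mul_comm, pow_mul, hζ.pow_eq_one, one_pow]
      rw [h2, sub_self, zero_div]
  -- key index bijection fact
  have hmain : ∀ i : ℕ, N ∣ c + i → b + ((c + i) / N - 1) * N = i := by
    intro i hdvd
    obtain ⟨q, hq⟩ := hdvd
    have hq1 : 1 ≤ q := by
      rcases Nat.eq_zero_or_pos q with h | h
      · rw [h, Nat.mul_zero] at hq; omega
      · exact h
    rw [hq, Nat.mul_div_cancel_left _ hN0]
    have h2 : (q - 1) * N + N = q * N := by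
      have h3 : (q - 1) * N + N = (q - 1 + 1) * N := by ring
      rw [h3]
      congr 1
      omega
    have hq' : c + i = q * N := by rw [hq]; ring
    omega
  calc ∑ m ∈ Finset.range N, (ζ ^ m) ^ c *
        Polynomial.eval (ζ ^ m) ((borweinPoly 3 2 n).map (Int.castRingHom ℂ))
      = ∑ m ∈ Finset.range N, ∑ i ∈ Finset.range (D + 1),
          (borweinCoeff 3 2 n i : ℂ) * (ζ ^ (c + i)) ^ m := by
        refine Finset.sum_congr rfl fun m _ => ?_
        rw [heval m, Finset.mul_sum]
        refine Finset.sum_congr rfl fun i _ => ?_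
        have h1 : (ζ ^ m) ^ c * ((borweinCoeff 3 2 n i : ℂ) * (ζ ^ m) ^ i)
            = (borweinCoeff 3 2 n i : ℂ) * ((ζ ^ m) ^ (c + i)) := by
          rw [pow_add]; ring
        rw [h1, ← pow_mul, mul_comm m (c + i), pow_mul]
    _ = ∑ i ∈ Finset.range (D + 1), (borweinCoeff 3 2 n i : ℂ) *
          ∑ m ∈ Finset.range N, (ζ ^ (c + i)) ^ m := by
        rw [Finset.sum_comm]
        exact Finset.sum_congr rfl fun i _ => by rw [Finset.mul_sum]
    _ = ∑ i ∈ Finset.range (D + 1), (borweinCoeff 3 2 n i : ℂ) *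
          (if N ∣ c + i then (N : ℂ) else 0) := by
        exact Finset.sum_congr rfl fun i _ => by rw [geo (c + i)]
    _ = (N : ℂ) * ∑ i ∈ (Finset.range (D + 1)).filter (fun i => N ∣ c + i),
          (borweinCoeff 3 2 n i : ℂ) := by
        rw [Finset.mul_sum, Finset.sum_filter]
        refine Finset.sum_congr rfl fun i _ => ?_
        by_cases h : N ∣ c + i <;> simp [h, mul_comm]
    _ = (N : ℂ) * (borweinM 3 2 n b : ℂ) := by
        congr 1
        have key : ∑ i ∈ (Finset.range (D + 1)).filter (fun i => N ∣ c + i),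
            borweinCoeff 3 2 n i = borweinM 3 2 n b := by
          unfold borweinM
          rw [← hD, ← hN]
          have hr : ∑ l ∈ Finset.range (D + 1), borweinCoeff 3 2 n (b + l * N)
              = ∑ l ∈ (Finset.range (D + 1)).filter (fun l => b + l * N ≤ D),
                  borweinCoeff 3 2 n (b + l * N) :=
            (Finset.sum_filter_of_ne (fun l _ hne => by
              by_contra hgt
              exact hne (aux_coeff_zero n _ (by omega)))).symm
          rw [hr]
          refine Finset.sum_nbij' (fun i => (c + i) / N - 1) (fun l => b + l * N)
            ?_ ?_ ?_ ?_ ?_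
          · intro i hi
            simp only [Finset.mem_filter, Finset.mem_range] at hi ⊢
            have hE := hmain i hi.2
            set E : ℕ := (c + i) / N - 1 with hEdef
            have hle : E ≤ E * N := Nat.le_mul_of_pos_right E hN0
            omega
          · intro l hl
            simp only [Finset.mem_filter, Finset.mem_range] at hl ⊢
            have hmul : N * (1 + l) = N + l * N := by ring
            exact ⟨by omega, ⟨1 + l, by omega⟩⟩
          · intro i hi
            simp only [Finset.mem_filter, Finset.mem_range] at hi
            exact hmain i hi.2
          · intro l hl
            show (c + (b + l * N)) / N - 1 = l
            have h1 : c + (b + l * N) = N * (1 + l) := by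
              have hmul : N * (1 + l) = N + l * N := by ring
              omega
            rw [h1, Nat.mul_div_cancel_left _ hN0]
            omega
          · intro i hi
            simp only [Finset.mem_filter, Finset.mem_range] at hi
            have hE := hmain i hi.2
            show borweinCoeff 3 2 n i = borweinCoeff 3 2 n (b + ((c + i) / N - 1) * N)
            rw [hE]
        rw [← key]
        push_cast
        rfl
lemma aux_ineq (K : ℕ) : 3 * K < 2 * 3 ^ K + 2 := by
  induction K with
  | zero => norm_num
  | succ k ih =>
    have h1 : 1 ≤ 3 ^ k := Nat.one_le_pow _ _ (by norm_num)
    calc 3 * (k + 1) = 3 * k + 3 := by ring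
      _ < 2 * 3 ^ k + 5 := by omega
      _ ≤ 2 * 3 ^ (k + 1) + 2 := by rw [pow_succ]; omega

theorem stmt_4 (n b : ℕ) (hn : 1 ≤ n) (hb : b < 3 * (n + 1)) (hdvd : 3 ∣ b) :
    0 < borweinM 3 2 n b := by
  have hN0 : 0 < 3 * (n + 1) := by positivity
  have hN0' : 3 * (n + 1) ≠ 0 := hN0.ne'
  obtain ⟨ζ, hζ⟩ : ∃ ζ : ℂ, IsPrimitiveRoot ζ (3 * (n + 1)) :=
    ⟨_, Complex.isPrimitiveRoot_exp _ hN0'⟩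
  have habsζ : ‖ζ‖ = 1 := by
    have := Complex.norm_eq_one_of_pow_eq_one hζ.pow_eq_one hN0'
    exact this
  set T' : Polynomial ℂ := (borweinPoly 3 2 n).map (Int.castRingHom ℂ) with hT'
  set f : ℕ → ℂ := fun m => (ζ ^ m) ^ (3 * (n + 1) - b) * Polynomial.eval (ζ ^ m) T' with hf
  have hfilter : ∑ m ∈ Finset.range (3 * (n + 1)), f m
      = ((3 * (n + 1) : ℕ) : ℂ) * (borweinM 3 2 n b : ℂ) := aux_filter_sum n b hb hζ
  obtain ⟨b0, hb0⟩ := hdvd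
  -- value at the two order-3 points
  have hmainval : ∀ m : ℕ, m = n + 1 ∨ m = 2 * (n + 1) → f m = (3 : ℂ) ^ (2 * (n + 1)) := by
    intro m hm
    have hprimK : IsPrimitiveRoot (ζ ^ (n + 1)) 3 := hζ.pow hN0 (by ring)
    have hprim : IsPrimitiveRoot (ζ ^ m) 3 := by
      rcases hm with rfl | rfl
      · exact hprimK
      · have h2 := hprimK.pow_of_coprime 2 (by norm_num)
        rwa [← pow_mul, mul_comm (n + 1) 2] at h2
    have hmb : 3 * (n + 1) ∣ m * b := by
      rcases hm with rfl | rfl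
      · exact ⟨b0, by rw [hb0]; ring⟩
      · exact ⟨2 * b0, by rw [hb0]; ring⟩
    have h1 : (ζ ^ m) ^ b = 1 := by
      rw [← pow_mul]; exact (hζ.pow_eq_one_iff_dvd _).mpr hmb
    have h2 : (ζ ^ m) ^ (3 * (n + 1)) = 1 := by
      rw [← pow_mul, mul_comm, pow_mul, hζ.pow_eq_one, one_pow]
    have h3 : (ζ ^ m) ^ (3 * (n + 1) - b) = 1 := by
      have h4 : (ζ ^ m) ^ (3 * (n + 1) - b) * (ζ ^ m) ^ b = 1 := by
        rw [← pow_add, Nat.sub_add_cancel (le_of_lt hb)]; exact h2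
      rwa [h1, mul_one] at h4
    show (ζ ^ m) ^ (3 * (n + 1) - b) * Polynomial.eval (ζ ^ m) T' = _
    rw [h3, one_mul, hT', aux_eval_borwein n (ζ ^ m),
      aux_root_val hprim ⟨n + 1, rfl⟩ (by norm_num) hN0]
    congr 1
    omega
  -- bound for the other summands
  have hbound : ∀ m ∈ Finset.range (3 * (n + 1)) \ {n + 1, 2 * (n + 1)},
      ‖f m‖ ≤ (3 : ℝ) ^ (n + 1) := by
    intro m hm
    simp only [Finset.mem_sdiff, Finset.mem_range, Finset.mem_insert,
      Finset.mem_singleton] at hm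
    obtain ⟨hmN, hm12⟩ := hm
    push_neg at hm12
    obtain ⟨hm1, hm2⟩ := hm12
    have hg0 : 0 < Nat.gcd m (3 * (n + 1)) := Nat.gcd_pos_of_pos_right m hN0
    have hgdvdN : Nat.gcd m (3 * (n + 1)) ∣ 3 * (n + 1) := Nat.gcd_dvd_right m _
    have hgdvdm : Nat.gcd m (3 * (n + 1)) ∣ m := Nat.gcd_dvd_left m _
    set g : ℕ := Nat.gcd m (3 * (n + 1)) with hgdef
    set d : ℕ := 3 * (n + 1) / g with hddef
    have hgd : g * d = 3 * (n + 1) := Nat.mul_div_cancel' hgdvdN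
    have hd0 : 0 < d := Nat.div_pos (Nat.le_of_dvd hN0 hgdvdN) hg0
    have hdN : d ∣ 3 * (n + 1) := Nat.div_dvd_of_dvd hgdvdN
    have hprim : IsPrimitiveRoot (ζ ^ m) d := by
      have h1 : IsPrimitiveRoot (ζ ^ g) d := hζ.pow hN0 hgd.symm
      have h2 := h1.pow_of_coprime (m / g) (Nat.coprime_div_gcd_div_gcd hg0)
      rwa [← pow_mul, Nat.mul_div_cancel' hgdvdm] at h2
    have habs1 : ‖(ζ ^ m) ^ (3 * (n + 1) - b)‖ = 1 := by
      rw [norm_pow, norm_pow, habsζ, one_pow, one_pow]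
    show ‖(ζ ^ m) ^ (3 * (n + 1) - b) * Polynomial.eval (ζ ^ m) T'‖ ≤ _
    rw [norm_mul, habs1, one_mul, hT', aux_eval_borwein n (ζ ^ m)]
    by_cases h3d : 3 ∣ d
    · have hdne3 : d ≠ 3 := by
        intro h
        rw [h] at hgd
        have hgK : g = n + 1 := by omega
        obtain ⟨t, ht⟩ : (n + 1) ∣ m := hgK ▸ hgdvdm
        have hcm : (n + 1) * 3 = 3 * (n + 1) := by ring
        rcases Nat.lt_or_ge t 3 with h3t | h3t
        · interval_cases t
          · -- m = 0, so g = 3(n+1), contradiction with g = n+1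
            rw [Nat.mul_zero] at ht
            rw [ht] at hgdef
            simp only [Nat.gcd_zero_left] at hgdef
            omega
          · omega
          · omega
        · have h33 : (n + 1) * 3 ≤ (n + 1) * t := Nat.mul_le_mul_left _ h3t
          omega
      have hd6 : 6 ≤ d := by omega
      rw [aux_root_val hprim hdN h3d hN0]
      have hNd : 3 * (n + 1) / d = g := by
        conv_lhs => rw [← hgd]
        exact Nat.mul_div_cancel g hd0
      have hexp : 2 * (3 * (n + 1) / d) ≤ n + 1 := by
        rw [hNd]
        have h6g : g * 6 ≤ g * d := Nat.mul_le_mul_left g hd6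
        omega
      calc ‖(3 : ℂ) ^ (2 * (3 * (n + 1) / d))‖
          = (3 : ℝ) ^ (2 * (3 * (n + 1) / d)) := by
            rw [norm_pow]; norm_num
        _ ≤ (3 : ℝ) ^ (n + 1) := pow_le_pow_right₀ (by norm_num) hexp
    · rw [aux_root_zero ⟨n + 1, rfl⟩ hprim hdN h3d hN0]
      simp only [norm_zero]
      positivity
  -- split the sum
  have hsub : ({n + 1, 2 * (n + 1)} : Finset ℕ) ⊆ Finset.range (3 * (n + 1)) := by
    intro x hx
    simp only [Finset.mem_insert, Finset.mem_singleton] at hx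
    simp only [Finset.mem_range]
    rcases hx with rfl | rfl <;> omega
  have hKne : n + 1 ≠ 2 * (n + 1) := by omega
  have hsplit : ∑ m ∈ Finset.range (3 * (n + 1)), f m
      = (∑ m ∈ Finset.range (3 * (n + 1)) \ {n + 1, 2 * (n + 1)}, f m)
        + ∑ m ∈ ({n + 1, 2 * (n + 1)} : Finset ℕ), f m := (Finset.sum_sdiff hsub).symm
  have hpair : ∑ m ∈ ({n + 1, 2 * (n + 1)} : Finset ℕ), f m = 2 * (3 : ℂ) ^ (2 * (n + 1)) := by
    rw [Finset.sum_pair hKne, hmainval _ (Or.inl rfl), hmainval _ (Or.inr rfl)]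
    ring
  have hEbound : ‖∑ m ∈ Finset.range (3 * (n + 1)) \ {n + 1, 2 * (n + 1)}, f m‖
      ≤ ((3 * (n + 1) - 2 : ℕ) : ℝ) * (3 : ℝ) ^ (n + 1) := by
    refine le_trans (norm_sum_le _ _) ?_
    refine le_trans (Finset.sum_le_sum hbound) ?_
    rw [Finset.sum_const, nsmul_eq_mul]
    have hcard : (Finset.range (3 * (n + 1)) \ {n + 1, 2 * (n + 1)}).card = 3 * (n + 1) - 2 := by
      rw [Finset.card_sdiff_of_subset hsub, Finset.card_range, Finset.card_pair hKne]
    rw [hcard]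
  -- combine
  have hcomb : (((3 * (n + 1) : ℕ) : ℂ)) * (borweinM 3 2 n b : ℂ)
      = (∑ m ∈ Finset.range (3 * (n + 1)) \ {n + 1, 2 * (n + 1)}, f m)
        + 2 * (3 : ℂ) ^ (2 * (n + 1)) := by
    rw [← hfilter, hsplit, hpair]
  have hzc : ((((3 * (n + 1) : ℕ) : ℤ) * borweinM 3 2 n b - 2 * 3 ^ (2 * (n + 1)) : ℤ) : ℂ)
      = ∑ m ∈ Finset.range (3 * (n + 1)) \ {n + 1, 2 * (n + 1)}, f m := by
    push_cast
    push_cast at hcomb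
    linear_combination hcomb
  have hineqR : |((((3 * (n + 1) : ℕ) : ℤ) * borweinM 3 2 n b
        - 2 * 3 ^ (2 * (n + 1)) : ℤ) : ℝ)|
      ≤ ((3 * (n + 1) - 2 : ℕ) : ℝ) * (3 : ℝ) ^ (n + 1) := by
    rw [← Complex.norm_intCast, hzc]
    exact hEbound
  have hineqZ : |((3 * (n + 1) : ℕ) : ℤ) * borweinM 3 2 n b - 2 * 3 ^ (2 * (n + 1))|
      ≤ ((3 * (n + 1) - 2 : ℕ) : ℤ) * 3 ^ (n + 1) := by
    have h := hineqR
    rw [show ((3 * (n + 1) - 2 : ℕ) : ℝ) * (3 : ℝ) ^ (n + 1)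
        = ((((3 * (n + 1) - 2 : ℕ) : ℤ) * 3 ^ (n + 1) : ℤ) : ℝ) by push_cast; ring] at h
    exact_mod_cast h
  -- final arithmetic
  have hP0 : (0 : ℤ) < 3 ^ (n + 1) := by positivity
  have hauxZ : ((3 * (n + 1) - 2 : ℕ) : ℤ) < 2 * 3 ^ (n + 1) := by
    have := aux_ineq (n + 1)
    have h2 : ((3 * (n + 1) - 2 : ℕ) : ℤ) ≤ 3 * ((n : ℤ) + 1) - 2 := by push_cast; omega
    have h3 : (3 : ℤ) * ((n : ℤ) + 1) < 2 * 3 ^ (n + 1) + 2 := by exact_mod_cast this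
    omega
  have hsq : (2 : ℤ) * 3 ^ (2 * (n + 1)) = 2 * 3 ^ (n + 1) * 3 ^ (n + 1) := by
    rw [two_mul (n + 1), pow_add]; ring
  have habs' := abs_le.mp hineqZ
  have hNM : 0 < ((3 * (n + 1) : ℕ) : ℤ) * borweinM 3 2 n b := by
    nlinarith [habs'.1, hauxZ, hP0, hsq]
  by_contra hM
  push_neg at hM
  have hNpos : (0 : ℤ) < ((3 * (n + 1) : ℕ) : ℤ) := by positivity
  nlinarith [hNM, mul_nonpos_of_nonneg_of_nonpos (le_of_lt hNpos) hM]
end
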